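/- arXiv:1207.6141 — 2 statements merged into one kernel-verified Lean document; each statement's English description precedes it below -/
import Mathlib

section
/- Let H be a graph with a vertex u of degree 1. Then H is rooted-contractible if and only if H − u (the graph obtained from H by deleting u) is rooted-contractible. -/
open SimpleGraph

/-- An `H`-scheme in `G`, where the embedding `f` identifies the vertices of `H`
with vertices of `G`.  It is a collection of paths `P_{uv}` in `G`, one for each
edge `uv` of `H`, such that `P_{uv}` is a `u,v`-path meeting `V(H)` exactly in
`{u, v}`, and any collection of edges of `H` whose paths share a common vertex
of `G` must have a common endpoint in `H`. -/
structure HScheme {α β : Type} (H : SimpleGraph α) (G : SimpleGraph β) (f : α ↪ β) where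
  path : ∀ u v, H.Adj u v → G.Walk (f u) (f v)
  path_symm : ∀ u v (h : H.Adj u v), path v u h.symm = (path u v h).reverse
  path_isPath : ∀ u v (h : H.Adj u v), (path u v h).IsPath
  root_mem : ∀ u v (h : H.Adj u v) (w : α), f w ∈ (path u v h).support → w = u ∨ w = v
  common_endpoint : ∀ x : β,
    (∃ u v, ∃ h : H.Adj u v, x ∈ (path u v h).support) →
    ∃ z : α, ∀ u v (h : H.Adj u v), x ∈ (path u v h).support → z = u ∨ z = v

/-- `G` contains `H` as a rooted minor: pairwise disjoint connected branch sets
`C v ⊆ V(G)`, one for each vertex `v` of `H`, with `f v ∈ C v`, such that for every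
edge `uv` of `H` there is an edge of `G` between `C u` and `C v`. -/
def RootedMinor {α β : Type} (H : SimpleGraph α) (G : SimpleGraph β) (f : α ↪ β) : Prop :=
  ∃ C : α → Set β,
    (∀ v, f v ∈ C v) ∧
    (∀ v, (G.induce (C v)).Connected) ∧
    (Pairwise fun u v => Disjoint (C u) (C v)) ∧
    (∀ u v, H.Adj u v → ∃ x ∈ C u, ∃ y ∈ C v, G.Adj x y)

/-- `G` contains `H` as a minor: pairwise disjoint connected branch sets, one for each
vertex of `H`, such that for every edge `uv` of `H` there is an edge of `G` between the
corresponding branch sets. -/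
def HasMinor {β α : Type} (G : SimpleGraph β) (H : SimpleGraph α) : Prop :=
  ∃ C : α → Set β,
    (∀ v, (G.induce (C v)).Connected) ∧
    (Pairwise fun u v => Disjoint (C u) (C v)) ∧
    (∀ u v, H.Adj u v → ∃ x ∈ C u, ∃ y ∈ C v, G.Adj x y)

/-- `H` is rooted-contractible: every (finite) graph `G` containing an `H`-scheme
contains `H` as a rooted minor. -/
def IsRootedContractible {α : Type} (H : SimpleGraph α) : Prop :=
  ∀ (β : Type) [Fintype β] (G : SimpleGraph β) (f : α ↪ β),
    Nonempty (HScheme H G f) → RootedMinor H G f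

/-- `H` is weakly rooted-contractible: every (finite) graph `G` containing an
`H`-scheme contains `H` as a minor. -/
def IsWeaklyRootedContractible {α : Type} (H : SimpleGraph α) : Prop :=
  ∀ (β : Type) [Fintype β] (G : SimpleGraph β) (f : α ↪ β),
    Nonempty (HScheme H G f) → HasMinor G H

private lemma aux_reach {V W : Type*} {A : SimpleGraph V} {B : SimpleGraph W} (g : V → W)
    (hg : ∀ x y, A.Adj x y → B.Reachable (g x) (g y)) {x y : V} (h : A.Reachable x y) :
    B.Reachable (g x) (g y) := by
  obtain ⟨p⟩ := h
  induction p with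
  | nil => exact Reachable.refl _
  | cons h p ih => exact (hg _ _ h).trans ih

private lemma dir_mp {α : Type} [Fintype α] [DecidableEq α] (H : SimpleGraph α) (u w : α)
    (hadj : H.Adj u w) (huniq : ∀ v, H.Adj u v → v = w) (hcon : IsRootedContractible H) :
    IsRootedContractible (H.induce ({u} : Set α)ᶜ) := by
  classical
  intro β _ G f hsch
  obtain ⟨sch⟩ := hsch
  have hwu : w ≠ u := fun h => H.irrefl (h ▸ hadj)
  have hwmem : w ∈ ({u} : Set α)ᶜ := by simpa using hwu
  let w₀ : ↥(({u} : Set α)ᶜ) := ⟨w, hwmem⟩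
  -- the extended graph on `Option β`
  let GP : SimpleGraph (Option β) :=
    { Adj := fun x y => (∃ a b, x = some a ∧ y = some b ∧ G.Adj a b) ∨
        (x = none ∧ y = some (f w₀)) ∨ (y = none ∧ x = some (f w₀))
      symm := by
        refine ⟨?_⟩; rintro x y (⟨a, b, rfl, rfl, hab⟩ | ⟨rfl, rfl⟩ | ⟨rfl, rfl⟩)
        · exact Or.inl ⟨b, a, rfl, rfl, hab.symm⟩
        · exact Or.inr (Or.inr ⟨rfl, rfl⟩)
        · exact Or.inr (Or.inl ⟨rfl, rfl⟩)
      loopless := by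
        refine ⟨?_⟩; rintro x (⟨a, b, rfl, h1, hab⟩ | ⟨rfl, h⟩ | ⟨rfl, h⟩)
        · exact G.irrefl ((Option.some.inj h1) ▸ hab)
        · exact Option.some_ne_none _ h.symm
        · exact Option.some_ne_none _ h.symm }
  have hmemne : ∀ v : α, v ≠ u → v ∈ ({u} : Set α)ᶜ := fun v hv => by simpa using hv
  let f'' : α ↪ Option β :=
    ⟨fun v => if h : v = u then none else some (f ⟨v, hmemne v h⟩), by
      intro a b hab
      dsimp only at hab
      by_cases ha : a = u
      · by_cases hb : b = u
        · rw [ha, hb]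
        · rw [dif_pos ha, dif_neg hb] at hab; exact absurd hab (by simp)
      · by_cases hb : b = u
        · rw [dif_pos hb, dif_neg ha] at hab; exact absurd hab (by simp)
        · rw [dif_neg ha, dif_neg hb] at hab
          exact congrArg Subtype.val (f.injective (Option.some.inj hab))⟩
  have hf''u : f'' u = none := by exact dif_pos rfl
  have hf''ne : ∀ (v : α) (hv : v ≠ u), f'' v = some (f ⟨v, hmemne v hv⟩) := by
    intro v hv; exact dif_neg hv
  have hf''w : f'' w = some (f w₀) := hf''ne w hwu
  let ι : G →g GP := ⟨some, fun h => Or.inl ⟨_, _, rfl, rfl, h⟩⟩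
  have hιinj : Function.Injective ι := fun a b => Option.some.inj
  -- existence of suitable walks for each edge of `H`
  have hex : ∀ (v v' : α) (h : H.Adj v v'), ∃ W : GP.Walk (f'' v) (f'' v'),
      W.IsPath ∧ (∀ z, f'' z ∈ W.support → z = v ∨ z = v') ∧
      (none ∈ W.support → v = u ∨ v' = u) ∧
      (∀ b, some b ∈ W.support → b ≠ f w₀ →
        ∃ (hv : v ≠ u) (hv' : v' ≠ u)
          (h' : (H.induce ({u} : Set α)ᶜ).Adj ⟨v, hmemne v hv⟩ ⟨v', hmemne v' hv'⟩),
          b ∈ (sch.path ⟨v, hmemne v hv⟩ ⟨v', hmemne v' hv'⟩ h').support) := by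
    intro v v' h
    by_cases hvu : v = u
    · rw [hvu, huniq v' (hvu ▸ h), hf''u, hf''w]
      refine ⟨Walk.cons (Or.inr (Or.inl ⟨rfl, rfl⟩)) Walk.nil, ?_, ?_, ?_, ?_⟩
      · simp
      · intro z hz
        simp only [Walk.support_cons, Walk.support_nil, List.mem_cons, List.mem_singleton,
          List.not_mem_nil, or_false] at hz
        rcases hz with hz | hz
        · by_cases hzu : z = u
          · exact Or.inl hzu
          · rw [hf''ne z hzu] at hz; exact (Option.some_ne_none _ hz).elim
        · by_cases hzu : z = u
          · rw [hzu, hf''u] at hz; exact (Option.some_ne_none _ hz.symm).elim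
          · rw [hf''ne z hzu] at hz
            have := f.injective (Option.some.inj hz)
            exact Or.inr (congrArg Subtype.val this)
      · intro _; exact Or.inl rfl
      · intro b hb hbne
        simp only [Walk.support_cons, Walk.support_nil, List.mem_cons, List.mem_singleton,
          List.not_mem_nil, or_false] at hb
        rcases hb with hb | hb
        · exact (Option.some_ne_none _ hb).elim
        · exact absurd (Option.some.inj hb) hbne
    · by_cases hv'u : v' = u
      · rw [hv'u, huniq v (hv'u ▸ h.symm), hf''u, hf''w]
        refine ⟨Walk.cons (Or.inr (Or.inr ⟨rfl, rfl⟩)) Walk.nil, ?_, ?_, ?_, ?_⟩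
        · simp
        · intro z hz
          simp only [Walk.support_cons, Walk.support_nil, List.mem_cons, List.mem_singleton,
            List.not_mem_nil, or_false] at hz
          rcases hz with hz | hz
          · by_cases hzu : z = u
            · rw [hzu, hf''u] at hz; exact (Option.some_ne_none _ hz.symm).elim
            · rw [hf''ne z hzu] at hz
              have := f.injective (Option.some.inj hz)
              exact Or.inl (congrArg Subtype.val this)
          · by_cases hzu : z = u
            · exact Or.inr hzu
            · rw [hf''ne z hzu] at hz; exact (Option.some_ne_none _ hz).elim
        · intro _; exact Or.inr rfl
        · intro b hb hbne
          simp only [Walk.support_cons, Walk.support_nil, List.mem_cons, List.mem_singleton,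
            List.not_mem_nil, or_false] at hb
          rcases hb with hb | hb
          · exact absurd (Option.some.inj hb) hbne
          · exact (Option.some_ne_none _ hb).elim
      · have h' : (H.induce ({u} : Set α)ᶜ).Adj ⟨v, hmemne v hvu⟩ ⟨v', hmemne v' hv'u⟩ := h
        rw [hf''ne v hvu, hf''ne v' hv'u]
        refine ⟨(sch.path _ _ h').map ι, ?_, ?_, ?_, ?_⟩
        · exact Walk.map_isPath_of_injective hιinj (sch.path_isPath _ _ h')
        · intro z hz
          rw [Walk.support_map, List.mem_map] at hz
          obtain ⟨b, hb, hbz⟩ := hz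
          by_cases hzu : z = u
          · rw [hzu, hf''u] at hbz; exact (Option.some_ne_none _ hbz).elim
          · rw [hf''ne z hzu] at hbz
            have hbeq : b = f ⟨z, hmemne z hzu⟩ := Option.some.inj hbz.symm |>.symm
            subst hbeq
            rcases sch.root_mem _ _ h' ⟨z, hmemne z hzu⟩ hb with h1 | h1
            · exact Or.inl (congrArg Subtype.val h1)
            · exact Or.inr (congrArg Subtype.val h1)
        · intro hz
          rw [Walk.support_map, List.mem_map] at hz
          obtain ⟨b, _, hbz⟩ := hz
          exact (Option.some_ne_none _ hbz).elim
        · intro b hb _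
          rw [Walk.support_map, List.mem_map] at hb
          obtain ⟨b', hb', hbz⟩ := hb
          have : b' = b := Option.some.inj hbz
          subst this
          exact ⟨hvu, hv'u, h', hb'⟩
  choose Wf hW1 hW2 hW3 hW4 using hex
  -- symmetrize
  let r : α → α → Prop := WellOrderingRel
  have hasymm : ∀ a b : α, r a b → ¬ r b a := fun a b h1 h2 =>
    (IsWellFounded.wf (r := r)).asymmetric _ _ h1 h2
  have htri : ∀ a b : α, a ≠ b → r a b ∨ r b a := fun a b hab => by
    rcases trichotomous_of r a b with h1 | h1 | h1
    · exact Or.inl h1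
    · exact absurd h1 hab
    · exact Or.inr h1
  letI : DecidableRel r := Classical.decRel r
  let P' : ∀ v v', H.Adj v v' → GP.Walk (f'' v) (f'' v') := fun v v' h =>
    if r v v' then Wf v v' h else (Wf v' v h.symm).reverse
  have hP'pos : ∀ (v v' : α) (h : H.Adj v v') (hr : r v v'), P' v v' h = Wf v v' h := by
    intro v v' h hr; simp only [P', if_pos hr]
  have hP'neg : ∀ (v v' : α) (h : H.Adj v v') (hr : ¬ r v v'),
      P' v v' h = (Wf v' v h.symm).reverse := by
    intro v v' h hr; simp only [P', if_neg hr]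
  have hsupp : ∀ (v v' : α) (h : H.Adj v v') (x : Option β), x ∈ (P' v v' h).support →
      x ∈ (Wf v v' h).support ∨ x ∈ (Wf v' v h.symm).support := by
    intro v v' h x hx
    by_cases hr : r v v'
    · rw [hP'pos v v' h hr] at hx; exact Or.inl hx
    · rw [hP'neg v v' h hr, Walk.support_reverse, List.mem_reverse] at hx; exact Or.inr hx
  have hP1 : ∀ v v' (h : H.Adj v v'), (P' v v' h).IsPath := by
    intro v v' h
    by_cases hr : r v v'
    · rw [hP'pos v v' h hr]; exact hW1 _ _ _
    · rw [hP'neg v v' h hr]; exact (hW1 _ _ _).reverse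
  have hP2 : ∀ v v' (h : H.Adj v v') (z : α), f'' z ∈ (P' v v' h).support → z = v ∨ z = v' := by
    intro v v' h z hz
    rcases hsupp v v' h _ hz with hx | hx
    · exact hW2 _ _ _ _ hx
    · exact (hW2 _ _ _ _ hx).symm
  have hP3 : ∀ v v' (h : H.Adj v v'), none ∈ (P' v v' h).support → v = u ∨ v' = u := by
    intro v v' h hz
    rcases hsupp v v' h _ hz with hx | hx
    · exact hW3 _ _ _ hx
    · exact (hW3 _ _ _ hx).symm
  have hP4 : ∀ v v' (h : H.Adj v v') (b : β), some b ∈ (P' v v' h).support → b ≠ f w₀ →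
      ∃ (hv : v ≠ u) (hv' : v' ≠ u)
        (h' : (H.induce ({u} : Set α)ᶜ).Adj ⟨v, hmemne v hv⟩ ⟨v', hmemne v' hv'⟩),
        b ∈ (sch.path ⟨v, hmemne v hv⟩ ⟨v', hmemne v' hv'⟩ h').support := by
    intro v v' h b hb hbne
    rcases hsupp v v' h _ hb with hx | hx
    · exact hW4 _ _ _ _ hx hbne
    · obtain ⟨hv', hv, h', hmem⟩ := hW4 _ _ _ _ hx hbne
      refine ⟨hv, hv', h'.symm, ?_⟩
      rw [sch.path_symm _ _ h', Walk.support_reverse, List.mem_reverse]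
      exact hmem
  have hscheme : Nonempty (HScheme H GP f'') := by
    refine ⟨⟨P', ?_, hP1, hP2, ?_⟩⟩
    · intro v v' h
      by_cases hr : r v v'
      · rw [hP'pos v v' h hr, hP'neg v' v h.symm (hasymm _ _ hr)]
      · have hr2 : r v' v := (htri v v' h.ne).resolve_left hr
        rw [hP'pos v' v h.symm hr2, hP'neg v v' h hr, Walk.reverse_reverse]
    · intro x hx
      obtain ⟨a₀, b₀, h₀, hx₀⟩ := hx
      match x with
      | none =>
        refine ⟨u, fun v v' h hm => ?_⟩
        rcases hP3 v v' h hm with h1 | h1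
        · exact Or.inl h1.symm
        · exact Or.inr h1.symm
      | some b =>
        by_cases hbe : b = f w₀
        · subst hbe
          refine ⟨w, fun v v' h hm => ?_⟩
          have : f'' w ∈ (P' v v' h).support := by rw [hf''w]; exact hm
          exact hP2 v v' h w this
        · obtain ⟨ha₀, hb₀, h₀', hmem₀⟩ := hP4 a₀ b₀ h₀ b hx₀ hbe
          obtain ⟨z₀, hz₀⟩ := sch.common_endpoint b ⟨_, _, h₀', hmem₀⟩
          refine ⟨z₀.val, fun v v' h hm => ?_⟩
          obtain ⟨hv, hv', h', hmem⟩ := hP4 v v' h b hm hbe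
          rcases hz₀ _ _ h' hmem with h1 | h1
          · exact Or.inl (congrArg Subtype.val h1)
          · exact Or.inr (congrArg Subtype.val h1)
  -- apply rooted contractibility of `H`
  obtain ⟨C, hC1, hC2, hC3, hC4⟩ := hcon (Option β) GP f'' hscheme
  have hnoneu : none ∈ C u := hf''u ▸ hC1 u
  have hnone : ∀ v : α, v ≠ u → none ∉ C v := fun v hv hmem =>
    (Set.disjoint_left.mp (hC3 hv) hmem) hnoneu
  refine ⟨fun v => {b | some b ∈ C v.val}, ?_, ?_, ?_, ?_⟩
  · intro v
    have hvne : v.val ≠ u := by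
      have := v.prop; simp only [Set.mem_compl_iff, Set.mem_singleton_iff] at this; exact this
    have := hC1 v.val
    rw [hf''ne v.val hvne] at this
    simpa using this
  · intro v
    have hvne : (v : α) ≠ u := by
      have := v.prop; simp only [Set.mem_compl_iff, Set.mem_singleton_iff] at this; exact this
    have hfv : f v ∈ {b | some b ∈ C v.val} := by
      have := hC1 v.val
      rw [hf''ne v.val hvne] at this
      simpa using this
    rw [connected_iff]
    constructor
    · rintro ⟨a, ha⟩ ⟨b, hb⟩
      have hreach : (GP.induce (C v.val)).Reachable ⟨some a, ha⟩ ⟨some b, hb⟩ :=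
        (hC2 v.val).preconnected _ _
      let g : ↥(C v.val) → ↥{b | some b ∈ C v.val} := fun x =>
        ⟨x.val.getD (f v), by
          obtain ⟨x, hx⟩ := x
          match x with
          | none => exact absurd hx (hnone _ hvne)
          | some b' => simpa using hx⟩
      have hg : ∀ x y, (GP.induce (C v.val)).Adj x y →
          (G.induce {b | some b ∈ C v.val}).Reachable (g x) (g y) := by
        rintro ⟨x, hx⟩ ⟨y, hy⟩ hadj'
        have hadj'' : GP.Adj x y := hadj'
        rcases hadj'' with ⟨a', b', rfl, rfl, hab⟩ | ⟨rfl, _⟩ | ⟨rfl, _⟩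
        · exact Adj.reachable (by exact hab)
        · exact absurd hx (hnone _ hvne)
        · exact absurd hy (hnone _ hvne)
      exact aux_reach g hg hreach
    · exact ⟨⟨f v, hfv⟩⟩
  · intro a b hne
    rw [Set.disjoint_left]
    intro x hxa hxb
    have hvalne : a.val ≠ b.val := fun hv => hne (Subtype.ext hv)
    exact (Set.disjoint_left.mp (hC3 hvalne) hxa) hxb
  · intro a b hab
    have hab' : H.Adj a.val b.val := hab
    obtain ⟨x, hx, y, hy, hxy⟩ := hC4 a.val b.val hab'
    have hane : a.val ≠ u := by
      have := a.prop; simp only [Set.mem_compl_iff, Set.mem_singleton_iff] at this; exact this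
    have hbne : b.val ≠ u := by
      have := b.prop; simp only [Set.mem_compl_iff, Set.mem_singleton_iff] at this; exact this
    rcases hxy with ⟨a', b', rfl, rfl, hG⟩ | ⟨rfl, _⟩ | ⟨rfl, _⟩
    · exact ⟨a', hx, b', hy, hG⟩
    · exact absurd hx (hnone _ hane)
    · exact absurd hy (hnone _ hbne)

private lemma aux_reach_set {V : Type*} {G : SimpleGraph V} {K : Set V} :
    ∀ {a b : V} (q : G.Walk a b), q.IsPath → a ∉ K → b ∈ K →
      ∃ (c : V) (q' : G.Walk a c), q'.IsPath ∧
        (∀ x ∈ q'.support, x ∈ q.support ∧ x ∉ K) ∧ ∃ i ∈ K, G.Adj c i := by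
  intro a b q
  induction q with
  | nil => intro _ ha hb; exact absurd hb ha
  | @cons a a₁ b h r ih =>
    intro hp ha hb
    by_cases h₁ : a₁ ∈ K
    · exact ⟨a, Walk.nil, by simp, by simp [ha], a₁, h₁, h⟩
    · obtain ⟨c, q', hq'p, hsub, i, hi, hadji⟩ := ih hp.of_cons h₁ hb
      refine ⟨c, Walk.cons h q', ?_, ?_, i, hi, hadji⟩
      · rw [Walk.cons_isPath_iff h q']
        exact ⟨hq'p, fun hc => ((Walk.cons_isPath_iff h r).mp hp).2 (hsub a hc).1⟩
      · intro x hx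
        rw [Walk.support_cons, List.mem_cons] at hx
        rcases hx with rfl | hx
        · exact ⟨Walk.start_mem_support _, ha⟩
        · obtain ⟨h1, h2⟩ := hsub x hx
          exact ⟨by rw [Walk.support_cons]; exact List.mem_cons_of_mem _ h1, h2⟩

private lemma aux_walk_reach {V : Type*} {G : SimpleGraph V} {X : Set V} :
    ∀ {a b : V} (q : G.Walk a b) (hX : ∀ x ∈ q.support, x ∈ X) (t : V) (ht : t ∈ q.support),
      (G.induce X).Reachable ⟨t, hX t ht⟩ ⟨b, hX b q.end_mem_support⟩ := by
  intro a b q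
  induction q with
  | nil =>
    intro hX t ht
    simp only [Walk.support_nil, List.mem_singleton] at ht
    subst ht
    exact Reachable.refl _
  | @cons a a₁ b h r ih =>
    intro hX t ht
    have hX' : ∀ x ∈ r.support, x ∈ X := fun x hx => hX x (by simp [hx])
    rw [Walk.support_cons, List.mem_cons] at ht
    rcases ht with rfl | ht
    · refine Reachable.trans ?_ (ih hX' a₁ r.start_mem_support)
      exact Adj.reachable (by exact h : (G.induce X).Adj ⟨t, _⟩ ⟨a₁, _⟩)
    · exact ih hX' t ht

private lemma aux_exists_adj {V : Type*} {G : SimpleGraph V} {x y : V} (hne : x ≠ y)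
    (h : G.Reachable x y) : ∃ z, G.Adj y z := by
  obtain ⟨p⟩ := h
  exact ⟨_, p.reverse.adj_snd (Walk.not_nil_of_ne (Ne.symm hne))⟩

private lemma dir_mpr {α : Type} [Fintype α] [DecidableEq α] (H : SimpleGraph α) (u w : α)
    (hadj : H.Adj u w) (huniq : ∀ v, H.Adj u v → v = w)
    (hcon : IsRootedContractible (H.induce ({u} : Set α)ᶜ)) :
    IsRootedContractible H := by
  classical
  intro β _ G f hsch
  obtain ⟨sch⟩ := hsch
  have hwu : w ≠ u := fun h => H.irrefl (h ▸ hadj)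
  have hmemne : ∀ v : α, v ≠ u → v ∈ ({u} : Set α)ᶜ := fun v hv => by simpa using hv
  have hne_of_mem : ∀ v : ↥(({u} : Set α)ᶜ), v.val ≠ u := fun v => by
    have := v.prop; simp only [Set.mem_compl_iff, Set.mem_singleton_iff] at this; exact this
  set P := sch.path u w hadj with hPdef
  have hPp : P.IsPath := sch.path_isPath u w hadj
  have hfufw : f u ≠ f w := fun h => hadj.ne (f.injective h)
  let I : Set β := {x | x ∈ P.support ∧ x ≠ f u ∧ x ≠ f w}
  let S : Set β := {x | x ∈ P.support ∧ x ≠ f w}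
  let K : Set β := {x | x ∈ P.support ∧ x ≠ f u}
  have hfwS : f w ∉ S := fun h => h.2 rfl
  have hfuS : f u ∈ S := ⟨P.start_mem_support, hfufw⟩
  have hfwK : f w ∈ K := ⟨P.end_mem_support, fun h => hfufw h.symm⟩
  have hIS : ∀ x, x ∈ I → x ∈ S := fun x hx => ⟨hx.1, hx.2.2⟩
  have hIK : ∀ x, x ∈ I → x ∈ K := fun x hx => ⟨hx.1, hx.2.1⟩
  -- the contracted graph
  let G' : SimpleGraph β :=
    { Adj := fun a b => a ≠ b ∧ a ∉ S ∧ b ∉ S ∧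
        (G.Adj a b ∨ (a = f w ∧ ∃ i ∈ I, G.Adj i b) ∨ (b = f w ∧ ∃ i ∈ I, G.Adj i a))
      symm := by
        refine ⟨?_⟩; rintro a b ⟨h1, h2, h3, (h4 | h4 | h4)⟩
        · exact ⟨h1.symm, h3, h2, Or.inl h4.symm⟩
        · exact ⟨h1.symm, h3, h2, Or.inr (Or.inr h4)⟩
        · exact ⟨h1.symm, h3, h2, Or.inr (Or.inl h4)⟩
      loopless := ⟨fun a h => h.1 rfl⟩ }
  -- roots other than u avoid S
  have hfv_notS : ∀ v : α, v ≠ u → f v ∉ S := by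
    intro v hv hmem
    rcases sch.root_mem u w hadj v hmem.1 with rfl | rfl
    · exact hv rfl
    · exact hmem.2 rfl
  -- paths of edges not involving u or w are disjoint from P
  have hdisj : ∀ (v v' : α) (hv : v ≠ u) (hv' : v' ≠ u) (hvw : v ≠ w) (hv'w : v' ≠ w)
      (h : H.Adj v v'), ∀ x, x ∈ (sch.path v v' h).support → x ∉ P.support := by
    intro v v' hv hv' hvw hv'w h x hx1 hx2
    obtain ⟨z, hz⟩ := sch.common_endpoint x ⟨v, v', h, hx1⟩
    rcases hz v v' h hx1 with rfl | rfl <;>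
      rcases hz u w hadj hx2 with h1 | h1 <;> simp_all
  have hfu_not : ∀ (v v' : α) (hv : v ≠ u) (hv' : v' ≠ u) (h : H.Adj v v'),
      f u ∉ (sch.path v v' h).support := by
    intro v v' hv hv' h hmem
    rcases sch.root_mem v v' h u hmem with rfl | rfl
    · exact hv rfl
    · exact hv' rfl
  -- walks attached at w
  have hexW : ∀ (v' : α), v' ≠ u → ∀ (h : H.Adj w v'), ∃ W : G'.Walk (f w) (f v'),
      W.IsPath ∧ (∀ x ∈ W.support, x ∉ S) ∧ (∀ z, f z ∈ W.support → z = w ∨ z = v') ∧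
      (∀ x ∈ W.support, x = f w ∨ x ∈ (sch.path w v' h).support) := by
    intro v' hv' h
    have hv'w : v' ≠ w := fun hh => H.irrefl (hh ▸ h)
    set Q := sch.path w v' h with hQdef
    have hQp : Q.IsPath := sch.path_isPath w v' h
    have hfuQ : f u ∉ Q.support := hfu_not w v' hwu hv' h
    have hfv'K : f v' ∉ K := by
      intro hmem
      rcases sch.root_mem u w hadj v' hmem.1 with rfl | rfl
      · exact hv' rfl
      · exact hv'w rfl
    obtain ⟨c, q', hq'p, hsub, i, hiK, hadjci⟩ :=
      aux_reach_set (K := K) Q.reverse hQp.reverse hfv'K hfwK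
    have hsubQ : ∀ x ∈ q'.support, x ∈ Q.support := by
      intro x hx
      have := (hsub x hx).1
      rwa [Walk.support_reverse, List.mem_reverse] at this
    have hnotK : ∀ x ∈ q'.support, x ∉ K := fun x hx => (hsub x hx).2
    have hnotS : ∀ x ∈ q'.support, x ∉ S := by
      intro x hx hxS
      by_cases hxu : x = f u
      · exact hfuQ (hxu ▸ hsubQ x hx)
      · exact hnotK x hx ⟨hxS.1, hxu⟩
    have hfwq' : f w ∉ q'.support := fun hmem => hnotK _ hmem hfwK
    have hcS : c ∉ S := hnotS c q'.end_mem_support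
    have hcfw : c ≠ f w := fun hh => hnotK c q'.end_mem_support (hh ▸ hfwK)
    have htrans : ∀ e ∈ q'.reverse.edges, e ∈ G'.edgeSet := by
      intro e he
      induction e with
      | _ a b =>
        have hGab : G.Adj a b := Walk.adj_of_mem_edges _ he
        have ha : a ∈ q'.support := by
          have := Walk.fst_mem_support_of_mem_edges _ he
          rwa [Walk.support_reverse, List.mem_reverse] at this
        have hb : b ∈ q'.support := by
          have := Walk.snd_mem_support_of_mem_edges _ he
          rwa [Walk.support_reverse, List.mem_reverse] at this
        exact ⟨hGab.ne, hnotS a ha, hnotS b hb, Or.inl hGab⟩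
    have hTadj : G'.Adj (f w) c := by
      refine ⟨fun hh => hcfw hh.symm, hfwS, hcS, ?_⟩
      by_cases hifw : i = f w
      · exact Or.inl (hifw ▸ hadjci).symm
      · exact Or.inr (Or.inl ⟨rfl, i, ⟨hiK.1, hiK.2, hifw⟩, hadjci.symm⟩)
    refine ⟨Walk.cons hTadj (q'.reverse.transfer G' htrans), ?_, ?_, ?_, ?_⟩
    · rw [Walk.cons_isPath_iff]
      constructor
      · exact (hq'p.reverse).transfer htrans
      · rw [Walk.support_transfer, Walk.support_reverse, List.mem_reverse]
        exact hfwq'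
    · intro x hx
      rw [Walk.support_cons, List.mem_cons, Walk.support_transfer, Walk.support_reverse,
        List.mem_reverse] at hx
      rcases hx with rfl | hx
      · exact hfwS
      · exact hnotS x hx
    · intro z hz
      rw [Walk.support_cons, List.mem_cons, Walk.support_transfer, Walk.support_reverse,
        List.mem_reverse] at hz
      rcases hz with hz | hz
      · exact Or.inl (f.injective hz)
      · exact sch.root_mem w v' h z (hsubQ _ hz)
    · intro x hx
      rw [Walk.support_cons, List.mem_cons, Walk.support_transfer, Walk.support_reverse,
        List.mem_reverse] at hx
      rcases hx with rfl | hx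
      · exact Or.inl rfl
      · exact Or.inr (hsubQ _ hx)
  -- walks for all edges of H − u
  have hex : ∀ (v v' : α) (hv : v ≠ u) (hv' : v' ≠ u) (h : H.Adj v v'),
      ∃ W : G'.Walk (f v) (f v'),
      W.IsPath ∧ (∀ x ∈ W.support, x ∉ S) ∧ (∀ z, f z ∈ W.support → z = v ∨ z = v') ∧
      (∀ x ∈ W.support, x = f w ∨ x ∈ (sch.path v v' h).support) := by
    intro v v' hv hv' h
    by_cases hvw : v = w
    · subst hvw
      exact hexW v' hv' h
    · by_cases hv'w : v' = w
      · subst hv'w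
        obtain ⟨W, p1, p2, p3, p4⟩ := hexW v hv h.symm
        refine ⟨W.reverse, p1.reverse, ?_, ?_, ?_⟩
        · intro x hx
          rw [Walk.support_reverse, List.mem_reverse] at hx
          exact p2 x hx
        · intro z hz
          rw [Walk.support_reverse, List.mem_reverse] at hz
          exact (p3 z hz).symm
        · intro x hx
          rw [Walk.support_reverse, List.mem_reverse] at hx
          rcases p4 x hx with h1 | h1
          · exact Or.inl h1
          · right
            rw [sch.path_symm v v' h, Walk.support_reverse, List.mem_reverse] at h1
            exact h1
      · have htrans : ∀ e ∈ (sch.path v v' h).edges, e ∈ G'.edgeSet := by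
          intro e he
          induction e with
          | _ a b =>
            have hGab : G.Adj a b := Walk.adj_of_mem_edges _ he
            have ha : a ∈ (sch.path v v' h).support := Walk.fst_mem_support_of_mem_edges _ he
            have hb : b ∈ (sch.path v v' h).support := Walk.snd_mem_support_of_mem_edges _ he
            exact ⟨hGab.ne, fun hS => hdisj v v' hv hv' hvw hv'w h a ha hS.1,
              fun hS => hdisj v v' hv hv' hvw hv'w h b hb hS.1, Or.inl hGab⟩
        refine ⟨(sch.path v v' h).transfer G' htrans, (sch.path_isPath v v' h).transfer htrans,
          ?_, ?_, ?_⟩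
        · intro x hx
          rw [Walk.support_transfer] at hx
          exact fun hS => hdisj v v' hv hv' hvw hv'w h x hx hS.1
        · intro z hz
          rw [Walk.support_transfer] at hz
          exact sch.root_mem v v' h z hz
        · intro x hx
          rw [Walk.support_transfer] at hx
          exact Or.inr hx
  choose Wf hW1 hW2 hW3 hW4 using hex
  -- symmetrize and build a scheme for H − u in G'
  let r : α → α → Prop := WellOrderingRel
  have hasymm : ∀ a b : α, r a b → ¬ r b a := fun a b h1 h2 =>
    (IsWellFounded.wf (r := r)).asymmetric _ _ h1 h2
  have htri : ∀ a b : α, a ≠ b → r a b ∨ r b a := fun a b hab => by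
    rcases trichotomous_of r a b with h1 | h1 | h1
    · exact Or.inl h1
    · exact absurd h1 hab
    · exact Or.inr h1
  letI : DecidableRel r := Classical.decRel r
  let f' : ↥(({u} : Set α)ᶜ) ↪ β :=
    ⟨fun v => f v.val, fun a b hab => Subtype.ext (f.injective hab)⟩
  have hadj_of : ∀ (a b : ↥(({u} : Set α)ᶜ)), (H.induce ({u} : Set α)ᶜ).Adj a b →
      H.Adj a.val b.val := fun a b hh => hh
  let P' : ∀ (a b : ↥(({u} : Set α)ᶜ)), (H.induce ({u} : Set α)ᶜ).Adj a b →
      G'.Walk (f' a) (f' b) := fun a b hh =>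
    if r a.val b.val then Wf a.val b.val (hne_of_mem a) (hne_of_mem b) (hadj_of a b hh)
    else (Wf b.val a.val (hne_of_mem b) (hne_of_mem a) (hadj_of a b hh).symm).reverse
  have hP'pos : ∀ a b hh, r a.val b.val →
      P' a b hh = Wf a.val b.val (hne_of_mem a) (hne_of_mem b) (hadj_of a b hh) := by
    intro a b hh hr; simp only [P', if_pos hr]
  have hP'neg : ∀ a b hh, ¬ r a.val b.val →
      P' a b hh = (Wf b.val a.val (hne_of_mem b) (hne_of_mem a) (hadj_of a b hh).symm).reverse := by
    intro a b hh hr; simp only [P', if_neg hr]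
  have hP1 : ∀ a b hh, (P' a b hh).IsPath := by
    intro a b hh
    by_cases hr : r a.val b.val
    · rw [hP'pos a b hh hr]; exact hW1 _ _ _ _ _
    · rw [hP'neg a b hh hr]; exact (hW1 _ _ _ _ _).reverse
  have hP2 : ∀ a b hh, ∀ x ∈ (P' a b hh).support, x ∉ S := by
    intro a b hh x hx
    by_cases hr : r a.val b.val
    · rw [hP'pos a b hh hr] at hx; exact hW2 _ _ _ _ _ x hx
    · rw [hP'neg a b hh hr, Walk.support_reverse, List.mem_reverse] at hx
      exact hW2 _ _ _ _ _ x hx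
  have hP3 : ∀ a b hh (z : α), f z ∈ (P' a b hh).support → z = a.val ∨ z = b.val := by
    intro a b hh z hz
    by_cases hr : r a.val b.val
    · rw [hP'pos a b hh hr] at hz; exact hW3 _ _ _ _ _ z hz
    · rw [hP'neg a b hh hr, Walk.support_reverse, List.mem_reverse] at hz
      exact (hW3 _ _ _ _ _ z hz).symm
  have hP4 : ∀ a b hh, ∀ x ∈ (P' a b hh).support,
      x = f w ∨ x ∈ (sch.path a.val b.val (hadj_of a b hh)).support := by
    intro a b hh x hx
    by_cases hr : r a.val b.val
    · rw [hP'pos a b hh hr] at hx; exact hW4 _ _ _ _ _ x hx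
    · rw [hP'neg a b hh hr, Walk.support_reverse, List.mem_reverse] at hx
      rcases hW4 _ _ _ _ _ x hx with h1 | h1
      · exact Or.inl h1
      · right
        rw [sch.path_symm b.val a.val (hadj_of a b hh).symm, Walk.support_reverse,
          List.mem_reverse]
        exact h1
  have hscheme : Nonempty (HScheme (H.induce ({u} : Set α)ᶜ) G' f') := by
    refine ⟨⟨P', ?_, hP1, ?_, ?_⟩⟩
    · intro a b hh
      by_cases hr : r a.val b.val
      · rw [hP'pos a b hh hr, hP'neg b a hh.symm (hasymm _ _ hr)]
      · have hvalne : a.val ≠ b.val := fun hv => (hadj_of a b hh).ne hv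
        have hr2 : r b.val a.val := (htri _ _ hvalne).resolve_left hr
        rw [hP'pos b a hh.symm hr2, hP'neg a b hh hr, Walk.reverse_reverse]
    · -- root_mem
      intro a b hh z hz
      rcases hP3 a b hh z.val hz with h1 | h1
      · exact Or.inl (Subtype.ext h1)
      · exact Or.inr (Subtype.ext h1)
    · -- common_endpoint
      intro x hx
      obtain ⟨a₀, b₀, h₀, hx₀⟩ := hx
      by_cases hxw : x = f w
      · subst hxw
        refine ⟨⟨w, hmemne w hwu⟩, fun a b hh hm => ?_⟩
        rcases hP3 a b hh w hm with h1 | h1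
        · exact Or.inl (Subtype.ext h1)
        · exact Or.inr (Subtype.ext h1)
      · have hmem₀ : x ∈ (sch.path a₀.val b₀.val (hadj_of a₀ b₀ h₀)).support :=
          (hP4 a₀ b₀ h₀ x hx₀).resolve_left hxw
        obtain ⟨z₀, hz₀⟩ := sch.common_endpoint x ⟨_, _, hadj_of a₀ b₀ h₀, hmem₀⟩
        have hz₀ne : z₀ ≠ u := by
          rcases hz₀ _ _ (hadj_of a₀ b₀ h₀) hmem₀ with rfl | rfl
          · exact hne_of_mem a₀
          · exact hne_of_mem b₀
        refine ⟨⟨z₀, hmemne z₀ hz₀ne⟩, fun a b hh hm => ?_⟩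
        have hmem : x ∈ (sch.path a.val b.val (hadj_of a b hh)).support :=
          (hP4 a b hh x hm).resolve_left hxw
        rcases hz₀ _ _ (hadj_of a b hh) hmem with h1 | h1
        · exact Or.inl (Subtype.ext h1)
        · exact Or.inr (Subtype.ext h1)
  -- apply rooted contractibility of H - u
  obtain ⟨C, hC1, hC2, hC3, hC4⟩ := hcon β G' f' hscheme
  -- branch sets avoid S (vertices of S are isolated in G')
  have hCS : ∀ (v : ↥(({u} : Set α)ᶜ)) (x : β), x ∈ C v → x ∉ S := by
    intro v x hx hxS
    have hne : f' v ≠ x := fun hh => hfv_notS v.val (hne_of_mem v) (hh ▸ hxS)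
    have hreach : (G'.induce (C v)).Reachable ⟨f' v, hC1 v⟩ ⟨x, hx⟩ :=
      (hC2 v).preconnected _ _
    obtain ⟨z, hz⟩ := aux_exists_adj (fun hh => hne (congrArg Subtype.val hh)) hreach
    have : G'.Adj x z.val := hz
    exact this.2.1 hxS
  -- w as an element
  have hwmem : w ∈ ({u} : Set α)ᶜ := hmemne w hwu
  have hfwC : f w ∈ C ⟨w, hwmem⟩ := hC1 ⟨w, hwmem⟩
  -- decompose P
  obtain ⟨s₁, ha₁, rest, hPeq⟩ := Walk.not_nil_iff.mp (Walk.not_nil_of_ne (p := P) hfufw)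
  have hsupp2 : P.support = f u :: rest.support := by rw [hPeq, Walk.support_cons]
  have hfu_rest : f u ∉ rest.support := by
    have := hPp
    rw [hPeq, Walk.cons_isPath_iff] at this
    exact this.2
  have hrest_sub : ∀ x ∈ rest.support, x ∈ P.support := by
    intro x hx; rw [hsupp2]; exact List.mem_cons_of_mem _ hx
  have hrest_iffK : ∀ x, x ∈ K ↔ x ∈ rest.support := by
    intro x
    constructor
    · intro hx
      have hx' : x ∈ P.support ∧ x ≠ f u := hx
      have h1 : x ∈ f u :: rest.support := by rw [← hsupp2]; exact hx'.1
      rw [List.mem_cons] at h1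
      exact h1.resolve_left hx'.2
    · intro hx
      exact ⟨hrest_sub x hx, fun hh => hfu_rest (hh ▸ hx)⟩
  have hrestX : ∀ x ∈ rest.support, x ∈ C ⟨w, hwmem⟩ ∪ I := by
    intro x hx
    by_cases hxw : x = f w
    · exact Or.inl (hxw ▸ hfwC)
    · exact Or.inr ⟨hrest_sub x hx, fun hh => hfu_rest (hh ▸ hx), hxw⟩
  -- the final branch sets
  have hCsub : ∀ (a : α) (ha : a ≠ u),
      C ⟨a, hmemne a ha⟩ ⊆ (if a = w then C ⟨w, hwmem⟩ ∪ I else C ⟨a, hmemne a ha⟩) := by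
    intro a ha
    by_cases haw : a = w
    · subst haw
      rw [if_pos rfl]
      exact fun x hx => Or.inl hx
    · rw [if_neg haw]
  let Cfin : α → Set β := fun v => if hvu : v = u then {f u}
    else (if v = w then C ⟨w, hwmem⟩ ∪ I else C ⟨v, hmemne v hvu⟩)
  have hCfin_u : Cfin u = {f u} := by simp only [Cfin, dif_pos]
  have hCfin_w : Cfin w = C ⟨w, hwmem⟩ ∪ I := by
    simp only [Cfin]
    rw [dif_neg hwu]
    simp
  have hCfin_o : ∀ (v : α) (h1 : v ≠ u), v ≠ w → Cfin v = C ⟨v, hmemne v h1⟩ := by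
    intro v h1 h2
    simp only [Cfin]
    rw [dif_neg h1, if_neg h2]
  -- connectivity of the w-branch set
  have hconW : (G.induce (C ⟨w, hwmem⟩ ∪ I)).Connected := by
    rw [connected_iff]
    refine ⟨?_, ⟨⟨f w, Or.inl hfwC⟩⟩⟩
    have hreachI : ∀ t (ht : t ∈ rest.support),
        (G.induce (C ⟨w, hwmem⟩ ∪ I)).Reachable ⟨t, hrestX t ht⟩ ⟨f w, Or.inl hfwC⟩ :=
      fun t ht => aux_walk_reach rest hrestX t ht
    have hreachC : ∀ x (hx : x ∈ C ⟨w, hwmem⟩),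
        (G.induce (C ⟨w, hwmem⟩ ∪ I)).Reachable ⟨x, Or.inl hx⟩ ⟨f w, Or.inl hfwC⟩ := by
      intro x hx
      have hreach' : (G'.induce (C ⟨w, hwmem⟩)).Reachable ⟨x, hx⟩ ⟨f w, hfwC⟩ :=
        (hC2 ⟨w, hwmem⟩).preconnected _ _
      let g : ↥(C ⟨w, hwmem⟩) → ↥(C ⟨w, hwmem⟩ ∪ I) := fun y => ⟨y.val, Or.inl y.prop⟩
      have hg : ∀ y z, (G'.induce (C ⟨w, hwmem⟩)).Adj y z →
          (G.induce (C ⟨w, hwmem⟩ ∪ I)).Reachable (g y) (g z) := by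
        rintro ⟨y, hy⟩ ⟨z, hz⟩ hadj'
        have hadj'' : G'.Adj y z := hadj'
        obtain ⟨hne', hyS, hzS, hor⟩ := hadj''
        rcases hor with hG | ⟨hyw, i, hiI, hGiz⟩ | ⟨hzw, i, hiI, hGiy⟩
        · exact Adj.reachable (by exact hG)
        · have hirest : i ∈ rest.support := (hrest_iffK i).mp (hIK i hiI)
          have h1 : (G.induce (C ⟨w, hwmem⟩ ∪ I)).Reachable (g ⟨y, hy⟩)
              ⟨i, Or.inr hiI⟩ := by
            have heq : g ⟨y, hy⟩ = ⟨f w, Or.inl hfwC⟩ := Subtype.ext hyw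
            rw [heq]
            exact (hreachI i hirest).symm
          exact h1.trans (Adj.reachable (by exact hGiz))
        · have hirest : i ∈ rest.support := (hrest_iffK i).mp (hIK i hiI)
          have h2 : (G.induce (C ⟨w, hwmem⟩ ∪ I)).Reachable ⟨i, Or.inr hiI⟩
              (g ⟨z, hz⟩) := by
            have heq : g ⟨z, hz⟩ = ⟨f w, Or.inl hfwC⟩ := Subtype.ext hzw
            rw [heq]
            exact hreachI i hirest
          exact (Adj.reachable (by exact hGiy.symm : (G.induce _).Adj (g ⟨y, hy⟩)
            ⟨i, Or.inr hiI⟩)).trans h2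
      exact aux_reach g hg hreach'
    have key : ∀ z : ↥(C ⟨w, hwmem⟩ ∪ I),
        (G.induce (C ⟨w, hwmem⟩ ∪ I)).Reachable z ⟨f w, Or.inl hfwC⟩ := by
      rintro ⟨z, hz | hz⟩
      · exact hreachC z hz
      · exact hreachI z ((hrest_iffK z).mp (hIK z hz))
    intro x y
    exact (key x).trans (key y).symm
  refine ⟨Cfin, ?_, ?_, ?_, ?_⟩
  · intro v
    by_cases hvu : v = u
    · rw [hvu, hCfin_u]; exact rfl
    · by_cases hvw : v = w
      · rw [hvw, hCfin_w]; exact Or.inl hfwC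
      · rw [hCfin_o v hvu hvw]; exact hC1 ⟨v, hmemne v hvu⟩
  · intro v
    by_cases hvu : v = u
    · rw [hvu, hCfin_u]
      rw [connected_iff]
      refine ⟨?_, ⟨⟨f u, rfl⟩⟩⟩
      rintro ⟨x, hx⟩ ⟨y, hy⟩
      have : x = y := by
        rw [Set.mem_singleton_iff] at hx hy; rw [hx, hy]
      subst this
      exact Reachable.refl _
    · by_cases hvw : v = w
      · rw [hvw, hCfin_w]; exact hconW
      · rw [hCfin_o v hvu hvw]
        rw [connected_iff]
        refine ⟨?_, ⟨⟨f v, hC1 ⟨v, hmemne v hvu⟩⟩⟩⟩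
        rintro x y
        have hreach' : (G'.induce (C ⟨v, hmemne v hvu⟩)).Reachable x y :=
          (hC2 ⟨v, hmemne v hvu⟩).preconnected x y
        let g : ↥(C ⟨v, hmemne v hvu⟩) → ↥(C ⟨v, hmemne v hvu⟩) := fun y => y
        have hg : ∀ a b, (G'.induce (C ⟨v, hmemne v hvu⟩)).Adj a b →
            (G.induce (C ⟨v, hmemne v hvu⟩)).Reachable (g a) (g b) := by
          rintro ⟨a, ha⟩ ⟨b, hb⟩ hadj'
          have hadj'' : G'.Adj a b := hadj'
          obtain ⟨hne', haS, hbS, hor⟩ := hadj''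
          have hvne : (⟨v, hmemne v hvu⟩ : ↥(({u} : Set α)ᶜ)) ≠ ⟨w, hwmem⟩ :=
            fun hh => hvw (congrArg Subtype.val hh)
          rcases hor with hG | ⟨haw, _⟩ | ⟨hbw, _⟩
          · exact Adj.reachable (by exact hG)
          · exact absurd (haw ▸ ha) (fun hmem => Set.disjoint_left.mp (hC3 hvne) hmem hfwC)
          · exact absurd (hbw ▸ hb) (fun hmem => Set.disjoint_left.mp (hC3 hvne) hmem hfwC)
        exact aux_reach g hg hreach'
  · -- pairwise disjoint
    intro a b hne
    rw [Set.disjoint_left]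
    intro x hxa hxb
    by_cases hau : a = u
    · rw [hau, hCfin_u, Set.mem_singleton_iff] at hxa
      subst hxa
      have hbu : b ≠ u := fun hh => hne (hau.trans hh.symm)
      by_cases hbw : b = w
      · rw [hbw, hCfin_w] at hxb
        rcases hxb with hxb | hxb
        · exact hCS _ _ hxb hfuS
        · exact hxb.2.1 rfl
      · rw [hCfin_o b hbu hbw] at hxb
        exact hCS _ _ hxb hfuS
    · by_cases hbu : b = u
      · rw [hbu, hCfin_u, Set.mem_singleton_iff] at hxb
        subst hxb
        by_cases haw : a = w
        · rw [haw, hCfin_w] at hxa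
          rcases hxa with hxa | hxa
          · exact hCS _ _ hxa hfuS
          · exact hxa.2.1 rfl
        · rw [hCfin_o a hau haw] at hxa
          exact hCS _ _ hxa hfuS
      · have hsubne : (⟨a, hmemne a hau⟩ : ↥(({u} : Set α)ᶜ)) ≠ ⟨b, hmemne b hbu⟩ :=
          fun hh => hne (congrArg Subtype.val hh)
        by_cases haw : a = w
        · have hbw : b ≠ w := fun hh => hne (haw.trans hh.symm)
          rw [haw, hCfin_w] at hxa
          rw [hCfin_o b hbu hbw] at hxb
          rcases hxa with hxa | hxa
          · have hsubne' : (⟨w, hwmem⟩ : ↥(({u} : Set α)ᶜ)) ≠ ⟨b, hmemne b hbu⟩ :=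
              fun hh => hbw (congrArg Subtype.val hh).symm
            exact Set.disjoint_left.mp (hC3 hsubne') hxa hxb
          · exact hCS _ _ hxb (hIS x hxa)
        · rw [hCfin_o a hau haw] at hxa
          by_cases hbw : b = w
          · rw [hbw, hCfin_w] at hxb
            rcases hxb with hxb | hxb
            · have hsubne' : (⟨a, hmemne a hau⟩ : ↥(({u} : Set α)ᶜ)) ≠ ⟨w, hwmem⟩ :=
                fun hh => haw (congrArg Subtype.val hh)
              exact Set.disjoint_left.mp (hC3 hsubne') hxa hxb
            · exact hCS _ _ hxa (hIS x hxb)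
          · rw [hCfin_o b hbu hbw] at hxb
            exact Set.disjoint_left.mp (hC3 hsubne) hxa hxb
  · -- edges
    intro a b hab
    by_cases hau : a = u
    · have hbw : b = w := huniq b (hau ▸ hab)
      rw [hau, hbw, hCfin_u, hCfin_w]
      exact ⟨f u, rfl, s₁, hrestX s₁ rest.start_mem_support, ha₁⟩
    · by_cases hbu : b = u
      · have haw : a = w := huniq a (hbu ▸ hab.symm)
        rw [haw, hbu, hCfin_u, hCfin_w]
        exact ⟨s₁, hrestX s₁ rest.start_mem_support, f u, rfl, ha₁.symm⟩
      · have hab' : (H.induce ({u} : Set α)ᶜ).Adj ⟨a, hmemne a hau⟩ ⟨b, hmemne b hbu⟩ := hab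
        obtain ⟨x, hx, y, hy, hxy⟩ := hC4 _ _ hab'
        obtain ⟨hne', hxS, hyS, hor⟩ := hxy
        have hCsubfin : ∀ (c : α) (hc : c ≠ u) (x : β), x ∈ C ⟨c, hmemne c hc⟩ →
            x ∈ Cfin c := by
          intro c hc x hxc
          by_cases hcw : c = w
          · rw [hcw, hCfin_w]
            left
            have : (⟨c, hmemne c hc⟩ : ↥(({u} : Set α)ᶜ)) = ⟨w, hwmem⟩ := Subtype.ext hcw
            rw [← this]
            exact hxc
          · rw [hCfin_o c hc hcw]; exact hxc
        rcases hor with hG | ⟨hxw, i, hiI, hGiy⟩ | ⟨hyw, i, hiI, hGix⟩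
        · exact ⟨x, hCsubfin a hau x hx, y, hCsubfin b hbu y hy, hG⟩
        · have haw : a = w := by
            by_contra haw
            have hsubne : (⟨a, hmemne a hau⟩ : ↥(({u} : Set α)ᶜ)) ≠ ⟨w, hwmem⟩ :=
              fun hh => haw (congrArg Subtype.val hh)
            exact Set.disjoint_left.mp (hC3 hsubne) (hxw ▸ hx) hfwC
          refine ⟨i, ?_, y, hCsubfin b hbu y hy, hGiy⟩
          rw [haw, hCfin_w]
          exact Or.inr hiI
        · have hbw : b = w := by
            by_contra hbw
            have hsubne : (⟨b, hmemne b hbu⟩ : ↥(({u} : Set α)ᶜ)) ≠ ⟨w, hwmem⟩ :=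
              fun hh => hbw (congrArg Subtype.val hh)
            exact Set.disjoint_left.mp (hC3 hsubne) (hyw ▸ hy) hfwC
          refine ⟨x, hCsubfin a hau x hx, i, ?_, hGix.symm⟩
          rw [hbw, hCfin_w]
          exact Or.inr hiI

/-- If `u` is a vertex of degree 1 in `H`, then `H` is
rooted-contractible iff `H − u` is rooted-contractible. -/
theorem leaf_rooted_contractible_iff {α : Type} [Fintype α] [DecidableEq α]
    (H : SimpleGraph α) [DecidableRel H.Adj] (u : α) (hu : H.degree u = 1) :
    IsRootedContractible H ↔ IsRootedContractible (H.induce ({u} : Set α)ᶜ) := by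
  classical
  have hcard : (H.neighborFinset u).card = 1 := hu
  obtain ⟨w, hw⟩ := Finset.card_eq_one.mp hcard
  have hadj : H.Adj u w := by
    have : w ∈ H.neighborFinset u := by rw [hw]; exact Finset.mem_singleton_self w
    rwa [SimpleGraph.mem_neighborFinset] at this
  have huniq : ∀ v, H.Adj u v → v = w := fun v hv => by
    have : v ∈ H.neighborFinset u := by rwa [SimpleGraph.mem_neighborFinset]
    rw [hw, Finset.mem_singleton] at this
    exact this
  exact ⟨fun h => dir_mp H u w hadj huniq h, fun h => dir_mpr H u w hadj huniq h⟩
end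

section
/- Let H be a graph containing a triangle on vertices u, v, w such that u and v each have degree 2 in H. Then H is rooted-contractible if and only if H − {u, v} (the graph obtained from H by deleting u and v) is rooted-contractible. -/
open SimpleGraph

section Helpers
variable {β : Type} {G : SimpleGraph β}

lemma reach_induce_mem {Z : Set β} :
    ∀ {a b : β} (p : G.Walk a b), (∀ x ∈ p.support, x ∈ Z) → ∀ (ha : a ∈ Z)
      (z : β), z ∈ p.support → ∀ (hzZ : z ∈ Z),
      (G.induce Z).Reachable ⟨a, ha⟩ ⟨z, hzZ⟩ := by
  intro a b p
  induction p with
  | nil =>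
    intro hp ha z hz hzZ
    simp only [SimpleGraph.Walk.support_nil, List.mem_singleton] at hz
    subst hz
    exact Reachable.refl _
  | @cons x y c hadj q ih =>
    intro hp ha z hz hzZ
    simp only [SimpleGraph.Walk.support_cons, List.mem_cons] at hz
    rcases hz with rfl | hz
    · exact Reachable.refl _
    · have hyZ : y ∈ Z := hp y (by simp)
      have step : (G.induce Z).Adj ⟨x, ha⟩ ⟨y, hyZ⟩ := by
        simp only [SimpleGraph.comap_adj, Function.Embedding.coe_subtype]
        exact hadj
      exact step.reachable.trans (ih (fun t ht => hp t (by simp [ht])) hyZ z hz hzZ)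

lemma reach_induce {Z : Set β} {a b : β} (p : G.Walk a b)
    (hp : ∀ x ∈ p.support, x ∈ Z) (ha : a ∈ Z) (hb : b ∈ Z) :
    (G.induce Z).Reachable ⟨a, ha⟩ ⟨b, hb⟩ :=
  reach_induce_mem p hp ha b p.end_mem_support hb

lemma no_isolated {Z : Set β} (hc : (G.induce Z).Connected) {a t : β}
    (ha : a ∈ Z) (ht : t ∈ Z) (hne : a ≠ t) : ∃ s ∈ Z, G.Adj s t := by
  obtain ⟨p⟩ := hc.preconnected ⟨t, ht⟩ ⟨a, ha⟩
  have hnil : ¬ p.Nil := by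
    intro hn
    exact hne (congrArg Subtype.val (SimpleGraph.Walk.eq_of_length_eq_zero
      (SimpleGraph.Walk.nil_iff_length_eq.mp hn))).symm
  obtain ⟨c, hadj, q, rfl⟩ := SimpleGraph.Walk.not_nil_iff.mp hnil
  simp only [SimpleGraph.comap_adj, Function.Embedding.coe_subtype] at hadj
  exact ⟨c.1, c.2, hadj.symm⟩

lemma first_split {N : Set β} :
    ∀ {a c : β} (p : G.Walk a c) (x₀ : β), x₀ ∈ p.support → x₀ ∈ N →
    ∃ m, m ∈ N ∧ ∃ (q : G.Walk a m) (r : G.Walk m c), p = q.append r ∧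
      (∀ x ∈ q.support, x ∈ N → x = m) := by
  intro a c p
  induction p with
  | nil =>
    intro x₀ hx₀ hN
    simp only [SimpleGraph.Walk.support_nil, List.mem_singleton] at hx₀
    subst hx₀
    exact ⟨x₀, hN, SimpleGraph.Walk.nil, SimpleGraph.Walk.nil, rfl, by simp⟩
  | @cons x y c hadj q ih =>
    intro x₀ hx₀ hN
    by_cases hxN : x ∈ N
    · exact ⟨x, hxN, SimpleGraph.Walk.nil, SimpleGraph.Walk.cons hadj q, rfl, by simp⟩
    · have hx₀' : x₀ ∈ q.support := by
        simp only [SimpleGraph.Walk.support_cons, List.mem_cons] at hx₀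
        rcases hx₀ with rfl | h
        · exact absurd hN hxN
        · exact h
      obtain ⟨m, hm, q', r', heq, hprop⟩ := ih x₀ hx₀' hN
      refine ⟨m, hm, SimpleGraph.Walk.cons hadj q', r',
        by rw [SimpleGraph.Walk.cons_append, heq], ?_⟩
      intro t ht htN
      simp only [SimpleGraph.Walk.support_cons, List.mem_cons] at ht
      rcases ht with rfl | ht
      · exact absurd htN hxN
      · exact hprop t ht htN

lemma suffix_avoid {S : Set β} :
    ∀ {c a : β} (p : G.Walk c a), p.IsPath → c ∉ S → a ∈ S →
    ∃ b s, ∃ q : G.Walk c b, q.IsPath ∧ G.Adj b s ∧ s ∈ S ∧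
      (∀ x ∈ q.support, x ∉ S) ∧ (∀ x ∈ q.support, x ∈ p.support) ∧ s ∈ p.support := by
  intro c a p
  induction p with
  | nil => intro _ hc ha; exact absurd ha hc
  | @cons x y c hadj q ih =>
    intro hp hc ha
    by_cases hy : y ∈ S
    · refine ⟨x, y, SimpleGraph.Walk.nil, SimpleGraph.Walk.IsPath.nil, hadj, hy, ?_, ?_, by simp⟩
      · intro t ht
        simp only [SimpleGraph.Walk.support_nil, List.mem_singleton] at ht
        subst ht; exact hc
      · intro t ht
        simp only [SimpleGraph.Walk.support_nil, List.mem_singleton] at ht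
        subst ht; simp
    · obtain ⟨b, s, q', hq'path, hbs, hsS, havoid, hsub, hsmem⟩ := ih hp.of_cons hy ha
      refine ⟨b, s, SimpleGraph.Walk.cons hadj q', ?_, hbs, hsS, ?_, ?_, by simp [hsmem]⟩
      · refine hq'path.cons ?_
        intro hxq
        exact ((SimpleGraph.Walk.cons_isPath_iff _ _).mp hp).2 (hsub x hxq)
      · intro t ht
        simp only [SimpleGraph.Walk.support_cons, List.mem_cons] at ht
        rcases ht with rfl | ht
        · exact hc
        · exact havoid t ht
      · intro t ht
        simp only [SimpleGraph.Walk.support_cons, List.mem_cons] at ht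
        rcases ht with rfl | ht
        · simp
        · simp [hsub t ht]

lemma support_induce_connected {a c : β} (p : G.Walk a c) :
    (G.induce {x | x ∈ p.support}).Connected := by
  rw [SimpleGraph.connected_iff]
  constructor
  · intro z1 z2
    have h1 := reach_induce_mem (Z := {x | x ∈ p.support}) p (fun x hx => hx)
      p.start_mem_support z1.1 z1.2 z1.2
    have h2 := reach_induce_mem (Z := {x | x ∈ p.support}) p (fun x hx => hx)
      p.start_mem_support z2.1 z2.2 z2.2
    exact h1.symm.trans h2
  · exact ⟨⟨a, p.start_mem_support⟩⟩

lemma induce_connected_mono {G1 G2 : SimpleGraph β} {Z : Set β}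
    (h : ∀ a b, a ∈ Z → b ∈ Z → G1.Adj a b → G2.Adj a b)
    (hc : (G1.induce Z).Connected) : (G2.induce Z).Connected := by
  refine SimpleGraph.Connected.map ⟨id, ?_⟩ Function.surjective_id hc
  intro x y hxy
  simp only [SimpleGraph.comap_adj, Function.Embedding.coe_subtype] at hxy ⊢
  exact h x.1 y.1 x.2 y.2 hxy

lemma end_mem_tail {a b : β} (r : G.Walk a b) (hne : r.support.tail ≠ []) :
    b ∈ r.support.tail := by
  cases r with
  | nil => simp at hne
  | cons h q =>
    simp only [SimpleGraph.Walk.support_cons, List.tail_cons]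
    exact q.end_mem_support

lemma transfer_of_support {G' : SimpleGraph β} {a b : β} (p : G.Walk a b)
    (h : ∀ x ∈ p.support, ∀ y ∈ p.support, G.Adj x y → G'.Adj x y) :
    ∃ q : G'.Walk a b, q.support = p.support := by
  have hedges : ∀ e ∈ p.edges, e ∈ G'.edgeSet := by
    intro e
    induction e using Sym2.ind with
    | _ x y =>
      intro he
      rw [SimpleGraph.mem_edgeSet]
      exact h x (p.fst_mem_support_of_mem_edges he) y (p.snd_mem_support_of_mem_edges he)
        (p.adj_of_mem_edges he)
  exact ⟨p.transfer G' hedges, SimpleGraph.Walk.support_transfer _ _⟩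

end Helpers

lemma deg_two_nbrs {α : Type} [Fintype α] [DecidableEq α] {H : SimpleGraph α}
    [DecidableRel H.Adj] {u v w x : α} (huv : H.Adj u v) (huw : H.Adj u w) (hvw : v ≠ w)
    (hdu : H.degree u = 2) (h : H.Adj u x) : x = v ∨ x = w := by
  have hsub : ({v, w} : Finset α) ⊆ H.neighborFinset u := by
    intro t ht
    rcases Finset.mem_insert.mp ht with rfl | ht
    · exact (H.mem_neighborFinset u t).mpr huv
    · rw [Finset.mem_singleton] at ht; subst ht
      exact (H.mem_neighborFinset u t).mpr huw
  have hcard : ({v, w} : Finset α).card = 2 := by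
    rw [Finset.card_insert_of_notMem (by simp [hvw]), Finset.card_singleton]
  have heq : ({v, w} : Finset α) = H.neighborFinset u :=
    Finset.eq_of_subset_of_card_le hsub (by rw [hcard]; exact le_of_eq hdu)
  have hx : x ∈ H.neighborFinset u := (H.mem_neighborFinset u x).mpr h
  rw [← heq] at hx
  simpa using hx

section Bwd
variable {α : Type} [Fintype α] [DecidableEq α] {H : SimpleGraph α} [DecidableRel H.Adj]
variable {u v w : α}

set_option maxHeartbeats 1000000 in
lemma backward_dir (huv : H.Adj u v) (hvw : H.Adj v w) (huw : H.Adj u w)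
    (hdu : H.degree u = 2) (hdv : H.degree v = 2)
    (hH' : IsRootedContractible (H.induce ({u, v} : Set α)ᶜ)) :
    IsRootedContractible H := by
  classical
  intro β _inst G f hS
  obtain ⟨S⟩ := hS
  have memc : ∀ {x : α}, x ≠ u → x ≠ v → x ∈ ({u, v} : Set α)ᶜ := by
    intro x h1 h2
    simp only [Set.mem_compl_iff, Set.mem_insert_iff, Set.mem_singleton_iff]
    push_neg
    exact ⟨h1, h2⟩
  have memc' : ∀ {x : α}, x ∈ ({u, v} : Set α)ᶜ → x ≠ u ∧ x ≠ v := by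
    intro x hx
    simp only [Set.mem_compl_iff, Set.mem_insert_iff, Set.mem_singleton_iff] at hx
    push_neg at hx
    exact hx
  have hwm : w ∈ ({u, v} : Set α)ᶜ := memc huw.ne.symm hvw.ne.symm
  -- the three triangle paths
  set PA := S.path u v huv with hPA
  set PB := S.path u w huw with hPB
  set PC := S.path v w hvw with hPC
  -- meeting lemma
  have meet : ∀ {x y a b : α} (hxy : H.Adj x y) (hab : H.Adj a b) {t : β},
      t ∈ (S.path x y hxy).support → t ∈ (S.path a b hab).support →
      ∃ z, (z = x ∨ z = y) ∧ (z = a ∨ z = b) := by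
    intro x y a b hxy hab t h1 h2
    obtain ⟨z, hz⟩ := S.common_endpoint t ⟨x, y, hxy, h1⟩
    exact ⟨z, hz x y hxy h1, hz a b hab h2⟩
  -- generic paths avoid the triangle paths
  have gen_avoid : ∀ {x y : α}, x ≠ u → x ≠ v → x ≠ w → y ≠ u → y ≠ v → y ≠ w →
      ∀ (h : H.Adj x y) (t : β), t ∈ (S.path x y h).support →
      t ∉ PA.support ∧ t ∉ PB.support ∧ t ∉ PC.support := by
    intro x y hxu hxv hxw hyu hyv hyw h t ht
    refine ⟨?_, ?_, ?_⟩
    · intro hmem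
      obtain ⟨z, hz1, hz2⟩ := meet h huv ht hmem
      rcases hz1 with rfl | rfl <;> rcases hz2 with rfl | rfl <;> simp_all
    · intro hmem
      obtain ⟨z, hz1, hz2⟩ := meet h huw ht hmem
      rcases hz1 with rfl | rfl <;> rcases hz2 with rfl | rfl <;> simp_all
    · intro hmem
      obtain ⟨z, hz1, hz2⟩ := meet h hvw ht hmem
      rcases hz1 with rfl | rfl <;> rcases hz2 with rfl | rfl <;> simp_all
  -- w-paths avoid PA
  have w_avoid : ∀ {y : α}, y ≠ u → y ≠ v → ∀ (h : H.Adj w y) (t : β),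
      t ∈ (S.path w y h).support → t ∉ PA.support := by
    intro y hyu hyv h t ht hmem
    obtain ⟨z, hz1, hz2⟩ := meet h huv ht hmem
    have h1 : w ≠ u := huw.ne.symm
    have h2 : w ≠ v := hvw.ne.symm
    rcases hz1 with rfl | rfl <;> rcases hz2 with rfl | rfl <;> simp_all
  -- the contraction region
  set M : Set β := {t | (t ∈ PB.support ∨ t ∈ PC.support) ∧ t ∉ PA.support ∧
    t ≠ f u ∧ t ≠ f v} with hM
  set Sg : Set β := {t | ∃ p : G.Walk (f w) t, ∀ x ∈ p.support, x ∈ M} with hSg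
  have hfwM : f w ∈ M := by
    refine ⟨Or.inl PB.end_mem_support, ?_, ?_, ?_⟩
    · intro hmem
      rcases S.root_mem u v huv w hmem with h | h
      · exact huw.ne h.symm
      · exact hvw.ne h.symm
    · intro hfwu
      exact huw.ne (f.injective hfwu).symm
    · intro hfwv
      exact hvw.ne (f.injective hfwv).symm
  have hfwSg : f w ∈ Sg := ⟨SimpleGraph.Walk.nil, by
    intro x hx
    simp only [SimpleGraph.Walk.support_nil, List.mem_singleton] at hx
    subst hx; exact hfwM⟩
  have SgsubM : Sg ⊆ M := by
    rintro t ⟨p, hp⟩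
    exact hp t p.end_mem_support
  have Sgclosed : ∀ {s t : β}, s ∈ Sg → G.Adj s t → t ∈ M → t ∈ Sg := by
    rintro s t ⟨p, hp⟩ hadj htM
    refine ⟨p.concat hadj, ?_⟩
    intro x hx
    rw [SimpleGraph.Walk.support_concat, List.mem_append] at hx
    rcases hx with hx | hx
    · exact hp x hx
    · rw [List.mem_singleton] at hx; subst hx; exact htM
  have Sgspread : ∀ {a : β}, a ∈ Sg → ∀ {b : β} (p : G.Walk a b),
      (∀ x ∈ p.support, x ∈ M) → ∀ x ∈ p.support, x ∈ Sg := by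
    intro a ha b p
    induction p with
    | nil =>
      intro hp x hx
      simp only [SimpleGraph.Walk.support_nil, List.mem_singleton] at hx
      subst hx; exact ha
    | @cons x y c hadj q ih =>
      intro hp t ht
      have hySg : y ∈ Sg := Sgclosed ha hadj (hp y (by simp))
      simp only [SimpleGraph.Walk.support_cons, List.mem_cons] at ht
      rcases ht with rfl | ht
      · exact ha
      · exact ih hySg (fun z hz => hp z (by simp [hz])) t ht
  -- the deleted set and the contracted graph
  set T' : Set β := {t | t ∈ PA.support ∨ (t ∈ Sg ∧ t ≠ f w)} with hT'
  have hfwT' : f w ∉ T' := by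
    rintro (hmem | ⟨-, hne⟩)
    · rcases S.root_mem u v huv w hmem with h | h
      · exact huw.ne h.symm
      · exact hvw.ne h.symm
    · exact hne rfl
  set G' : SimpleGraph β := SimpleGraph.fromRel (fun a b =>
    (a ∉ T' ∧ b ∉ T' ∧ G.Adj a b) ∨ (a = f w ∧ b ∉ T' ∧ ∃ s ∈ Sg, G.Adj s b)) with hG'
  have edgeT' : ∀ {a b : β}, G'.Adj a b → a ∉ T' ∧ b ∉ T' := by
    intro a b hab
    rw [hG', SimpleGraph.fromRel_adj] at hab
    obtain ⟨hne, h | h⟩ := hab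
    · rcases h with ⟨h1, h2, -⟩ | ⟨h1, h2, -⟩
      · exact ⟨h1, h2⟩
      · exact ⟨h1 ▸ hfwT', h2⟩
    · rcases h with ⟨h1, h2, -⟩ | ⟨h1, h2, -⟩
      · exact ⟨h2, h1⟩
      · exact ⟨h2, h1 ▸ hfwT'⟩
  -- root images avoid T'
  have hfT' : ∀ (x : α), x ≠ u → x ≠ v → f x ∉ T' := by
    intro x hxu hxv
    rintro (hmem | ⟨hS2, hne⟩)
    · rcases S.root_mem u v huv x hmem with h | h
      · exact hxu h
      · exact hxv h
    · obtain ⟨hBC, -, -, -⟩ := SgsubM hS2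
      rcases hBC with hb | hc
      · rcases S.root_mem u w huw x hb with h | h
        · exact hxu h
        · exact hne (congrArg f h)
      · rcases S.root_mem v w hvw x hc with h | h
        · exact hxv h
        · exact hne (congrArg f h)
  have hfSg : ∀ (x : α), x ≠ w → f x ∉ Sg := by
    intro x hxw hmem
    obtain ⟨hBC, hA, hu2, hv2⟩ := SgsubM hmem
    rcases hBC with hb | hc
    · rcases S.root_mem u w huw x hb with h | h
      · exact hu2 (congrArg f h)
      · exact hxw h
    · rcases S.root_mem v w hvw x hc with h | h
      · exact hv2 (congrArg f h)
      · exact hxw h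
  -- rerouted paths for w-edges
  have reroute : ∀ (y : α), y ≠ u → y ≠ v → ∀ (h : H.Adj w y),
      ∃ R : G'.Walk (f w) (f y), R.IsPath ∧
        ∀ t ∈ R.support, t ∈ (S.path w y h).support := by
    intro y hyu hyv h
    have hyw : y ≠ w := fun he => h.ne he.symm
    obtain ⟨b, s, q, hqpath, hbs, hsSg, havoid, hsub, hsmem⟩ :=
      suffix_avoid (S := Sg) (S.path w y h).reverse (S.path_isPath w y h).reverse
        (hfSg y hyw) hfwSg
    have hsubP : ∀ x ∈ q.support, x ∈ (S.path w y h).support := by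
      intro x hx
      have := hsub x hx
      rwa [SimpleGraph.Walk.support_reverse, List.mem_reverse] at this
    have hqT' : ∀ x ∈ q.support, x ∉ T' := by
      intro x hx
      rintro (hmem | ⟨hS2, -⟩)
      · exact w_avoid hyu hyv h x (hsubP x hx) hmem
      · exact havoid x hx hS2
    obtain ⟨q', hq'supp⟩ := transfer_of_support (G' := G') q (by
      intro x hx y2 hy2 hadj
      rw [hG', SimpleGraph.fromRel_adj]
      exact ⟨hadj.ne, Or.inl (Or.inl ⟨hqT' x hx, hqT' y2 hy2, hadj⟩)⟩)
    have hbT' : b ∉ T' := hqT' b q.end_mem_support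
    have hbfw : b ≠ f w := fun he => havoid b q.end_mem_support (he ▸ hfwSg)
    have hadjfwb : G'.Adj (f w) b := by
      rw [hG', SimpleGraph.fromRel_adj]
      exact ⟨fun he => hbfw he.symm, Or.inl (Or.inr ⟨rfl, hbT', s, hsSg, hbs.symm⟩)⟩
    have hq'path : q'.IsPath := by
      rw [SimpleGraph.Walk.isPath_def, hq'supp]
      exact hqpath.support_nodup
    refine ⟨SimpleGraph.Walk.cons hadjfwb q'.reverse, ?_, ?_⟩
    · refine hq'path.reverse.cons ?_
      rw [SimpleGraph.Walk.support_reverse, List.mem_reverse, hq'supp]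
      intro hmem
      exact havoid (f w) hmem hfwSg
    · intro t ht
      simp only [SimpleGraph.Walk.support_cons, List.mem_cons] at ht
      rcases ht with rfl | ht
      · exact (S.path w y h).start_mem_support
      · rw [SimpleGraph.Walk.support_reverse, List.mem_reverse, hq'supp] at ht
        exact hsubP t ht
  -- paths for the H'-scheme in G'
  have key : ∀ (x y : α), x ≠ u → x ≠ v → y ≠ u → y ≠ v → ∀ (h : H.Adj x y),
      ∃ q : G'.Walk (f x) (f y), q.IsPath ∧
        ∀ t ∈ q.support, t ∈ (S.path x y h).support := by
    intro x y hxu hxv hyu hyv h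
    by_cases hxw : x = w
    · subst hxw
      exact reroute y hyu hyv h
    · by_cases hyw : y = w
      · subst hyw
        obtain ⟨R, hRp, hRs⟩ := reroute x hxu hxv h.symm
        refine ⟨R.reverse, hRp.reverse, ?_⟩
        intro t ht
        rw [SimpleGraph.Walk.support_reverse, List.mem_reverse] at ht
        have := hRs t ht
        rwa [S.path_symm _ _ h, SimpleGraph.Walk.support_reverse, List.mem_reverse] at this
      · have hav := gen_avoid hxu hxv hxw hyu hyv hyw h
        have hPT' : ∀ t ∈ (S.path x y h).support, t ∉ T' := by
          intro t ht
          rintro (hmem | ⟨hS2, -⟩)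
          · exact (hav t ht).1 hmem
          · obtain ⟨hBC, -⟩ := SgsubM hS2
            rcases hBC with hb | hc
            · exact (hav t ht).2.1 hb
            · exact (hav t ht).2.2 hc
        obtain ⟨q, hqsupp⟩ := transfer_of_support (G' := G') (S.path x y h) (by
          intro x2 hx2 y2 hy2 hadj
          rw [hG', SimpleGraph.fromRel_adj]
          exact ⟨hadj.ne, Or.inl (Or.inl ⟨hPT' x2 hx2, hPT' y2 hy2, hadj⟩)⟩)
        refine ⟨q, ?_, ?_⟩
        · rw [SimpleGraph.Walk.isPath_def, hqsupp]
          exact (S.path_isPath x y h).support_nodup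
        · intro t ht
          rw [hqsupp] at ht
          exact ht
  -- build the H'-scheme in G'
  set f' : ↥(({u, v} : Set α)ᶜ) ↪ β := (Function.Embedding.subtype _).trans f with hf'
  have key' : ∀ (x y : ↥(({u, v} : Set α)ᶜ))
      (h : (H.induce ({u, v} : Set α)ᶜ).Adj x y),
      ∃ q : G'.Walk (f' x) (f' y), q.IsPath ∧
        ∀ t ∈ q.support, t ∈ (S.path x.1 y.1 h).support :=
    fun x y h => key x.1 y.1 (memc' x.2).1 (memc' x.2).2 (memc' y.2).1 (memc' y.2).2 h
  choose pick hp1 hp2 using key'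
  set enc : ↥(({u, v} : Set α)ᶜ) → ℕ := fun a => ((Fintype.equivFin α) a.1 : ℕ) with henc
  have encInj : Function.Injective enc := by
    intro a b hab
    exact Subtype.ext ((Fintype.equivFin α).injective (Fin.val_injective hab))
  set pathF : ∀ (x y : ↥(({u, v} : Set α)ᶜ)),
      (H.induce ({u, v} : Set α)ᶜ).Adj x y → G'.Walk (f' x) (f' y) := fun x y h =>
    if enc x < enc y then pick x y h else (pick y x h.symm).reverse with hpathF
  have hQ : ∀ x y (h : (H.induce ({u, v} : Set α)ᶜ).Adj x y), (pathF x y h).IsPath ∧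
      ∀ t ∈ (pathF x y h).support, t ∈ (S.path x.1 y.1 h).support := by
    intro x y h
    rw [hpathF]
    by_cases hlt : enc x < enc y
    · simp only [if_pos hlt]
      exact ⟨hp1 x y h, hp2 x y h⟩
    · simp only [if_neg hlt]
      refine ⟨(hp1 y x h.symm).reverse, ?_⟩
      intro t ht
      rw [SimpleGraph.Walk.support_reverse, List.mem_reverse] at ht
      have := hp2 y x h.symm t ht
      rwa [S.path_symm x.1 y.1 h, SimpleGraph.Walk.support_reverse, List.mem_reverse] at this
  have scheme : HScheme (H.induce ({u, v} : Set α)ᶜ) G' f' := by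
    refine ⟨pathF, ?_, fun x y h => (hQ x y h).1, ?_, ?_⟩
    · intro x y h
      rw [hpathF]
      by_cases hlt : enc x < enc y
      · have hltn : ¬ enc y < enc x := lt_asymm hlt
        simp only [if_pos hlt, if_neg hltn]
      · have hne : enc x ≠ enc y := fun he => h.ne (encInj he)
        have hlt' : enc y < enc x := by omega
        simp only [if_pos hlt', if_neg hlt, SimpleGraph.Walk.reverse_reverse]
    · intro x y h z hz
      have := (hQ x y h).2 (f' z) hz
      rcases S.root_mem x.1 y.1 h z.1 this with h1 | h1
      · exact Or.inl (Subtype.ext h1)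
      · exact Or.inr (Subtype.ext h1)
    · intro t hex
      obtain ⟨x0, y0, h0, hm0⟩ := hex
      have hm0' := (hQ x0 y0 h0).2 t hm0
      obtain ⟨z, hz⟩ := S.common_endpoint t ⟨x0.1, y0.1, h0, hm0'⟩
      have hzc : z = x0.1 ∨ z = y0.1 := hz x0.1 y0.1 h0 hm0'
      have hzm : z ∈ ({u, v} : Set α)ᶜ := by
        rcases hzc with rfl | rfl
        · exact x0.2
        · exact y0.2
      refine ⟨⟨z, hzm⟩, ?_⟩
      intro x y h hm
      rcases hz x.1 y.1 h ((hQ x y h).2 t hm) with h1 | h1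
      · exact Or.inl (Subtype.ext h1)
      · exact Or.inr (Subtype.ext h1)
  obtain ⟨D, hDroot, hDconn, hDdisj, hDadj⟩ := hH' β G' f' ⟨scheme⟩
  set w' : ↥(({u, v} : Set α)ᶜ) := ⟨w, hwm⟩ with hw'
  -- branch sets avoid the deleted region
  have hD_T' : ∀ (x : ↥(({u, v} : Set α)ᶜ)) (t : β), t ∈ D x → t ∉ T' := by
    intro x t ht htT'
    have hfx : f' x ∉ T' := hfT' x.1 (memc' x.2).1 (memc' x.2).2
    have hne : f' x ≠ t := fun he => hfx (he ▸ htT')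
    obtain ⟨s2, hs2, hadj⟩ := no_isolated (hDconn x) (hDroot x) ht hne
    exact (edgeT' hadj).2 htT'
  have hfwD : ∀ (x : ↥(({u, v} : Set α)ᶜ)), f w ∈ D x → x = w' := by
    intro x hmem
    by_contra hne
    exact (hDdisj hne).ne_of_mem hmem (hDroot w') rfl
  have SgD : ∀ (x : ↥(({u, v} : Set α)ᶜ)) (t : β), t ∈ Sg → t ∈ D x → x = w' := by
    intro x t htS htD
    by_cases hfw : t = f w
    · exact hfwD x (hfw ▸ htD)
    · exact absurd (Or.inr ⟨htS, hfw⟩) (hD_T' x t htD)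
  -- the two attachment points on PA
  obtain ⟨tB, sB, qB, -, hBadj, hsBSg, hBavoid, hBsub0, -⟩ :=
    suffix_avoid (S := Sg) PB (S.path_isPath u w huw) (hfSg u huw.ne) hfwSg
  obtain ⟨tC, sC, qC, -, hCadj, hsCSg, hCavoid, hCsub0, -⟩ :=
    suffix_avoid (S := Sg) PC (S.path_isPath v w hvw) (hfSg v hvw.ne) hfwSg
  have htBB : tB ∈ PB.support := hBsub0 tB qB.end_mem_support
  have htCC : tC ∈ PC.support := hCsub0 tC qC.end_mem_support
  have htBSg : tB ∉ Sg := hBavoid tB qB.end_mem_support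
  have htCSg : tC ∉ Sg := hCavoid tC qC.end_mem_support
  have htBA : tB ∈ PA.support := by
    by_contra hnA
    refine htBSg (Sgclosed hsBSg hBadj.symm ⟨Or.inl htBB, hnA, ?_, ?_⟩)
    · intro he; exact hnA (he ▸ PA.start_mem_support)
    · intro he; exact hnA (he ▸ PA.end_mem_support)
  have htCA : tC ∈ PA.support := by
    by_contra hnA
    refine htCSg (Sgclosed hsCSg hCadj.symm ⟨Or.inr htCC, hnA, ?_, ?_⟩)
    · intro he; exact hnA (he ▸ PA.start_mem_support)
    · intro he; exact hnA (he ▸ PA.end_mem_support)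
  have htBC : tB ≠ tC := by
    intro he
    obtain ⟨z, hz⟩ := S.common_endpoint tB ⟨u, v, huv, htBA⟩
    have h1 := hz u v huv htBA
    have h2 := hz u w huw htBB
    have h3 := hz v w hvw (he ▸ htCC)
    rcases h1 with rfl | rfl
    · rcases h3 with h4 | h4
      · exact huv.ne h4
      · exact huw.ne h4
    · rcases h2 with h4 | h4
      · exact huv.ne h4.symm
      · exact hvw.ne h4
  -- split PA at the first attachment point
  obtain ⟨m, hmN, qA, rA, heqA, hfirst⟩ :=
    first_split (N := {t : β | ∃ s ∈ Sg, G.Adj t s}) PA tB htBA ⟨sB, hsBSg, hBadj⟩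
  have hsplit0 : PA.support = qA.support ++ rA.support.tail := by
    rw [heqA, SimpleGraph.Walk.support_append]
  have hnodup : (qA.support ++ rA.support.tail).Nodup := by
    rw [← hsplit0]; exact (S.path_isPath u v huv).support_nodup
  have hdisj0 : ∀ t, t ∈ qA.support → t ∈ rA.support.tail → False := by
    intro t h1 h2
    exact (List.disjoint_of_nodup_append hnodup) h1 h2
  have htBfv : tB ≠ f v := by
    intro he
    rcases S.root_mem u w huw v (he ▸ htBB) with h | h
    · exact huv.ne h.symm
    · exact hvw.ne h
  have hmfv : m ≠ f v := by
    intro hm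
    have htBrr : tB ∈ rA.support.tail := by
      rcases List.mem_append.mp (hsplit0 ▸ htBA) with h1 | h1
      · exact absurd (hfirst tB h1 ⟨sB, hsBSg, hBadj⟩) (hm ▸ htBfv)
      · exact h1
    subst hm
    exact hdisj0 (f v) qA.end_mem_support
      (end_mem_tail rA (List.ne_nil_of_mem htBrr))
  obtain ⟨nA, hrA, rr, hrAeq⟩ := SimpleGraph.Walk.not_nil_iff.mp
    (SimpleGraph.Walk.not_nil_of_ne (p := rA) hmfv)
  have hsplit : PA.support = qA.support ++ rr.support := by
    rw [hsplit0, hrAeq]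
    simp only [SimpleGraph.Walk.support_cons, List.tail_cons]
  have hdisjK : ∀ t, t ∈ qA.support → t ∈ rr.support → False := by
    intro t h1 h2
    refine hdisj0 t h1 ?_
    rw [hrAeq]
    simpa using h2
  have hsplit' : ∀ t ∈ PA.support, t ∈ qA.support ∨ t ∈ rr.support := by
    intro t ht
    rw [hsplit] at ht
    exact List.mem_append.mp ht
  have hqAsub : ∀ t ∈ qA.support, t ∈ PA.support := by
    intro t ht; rw [hsplit]; exact List.mem_append.mpr (Or.inl ht)
  have hrrsub : ∀ t ∈ rr.support, t ∈ PA.support := by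
    intro t ht; rw [hsplit]; exact List.mem_append.mpr (Or.inr ht)
  obtain ⟨sm, hsmSg, hmsm⟩ := hmN
  -- the second attachment point lies in the second part
  have hsecond : ∃ tK ∈ rr.support, ∃ sK ∈ Sg, G.Adj tK sK := by
    by_cases hc1 : tC ∈ qA.support
    · have htCm : tC = m := hfirst tC hc1 ⟨sC, hsCSg, hCadj⟩
      have htBm : tB ≠ m := fun he => htBC (he.trans htCm.symm)
      rcases hsplit' tB htBA with h1 | h1
      · exact absurd (hfirst tB h1 ⟨sB, hsBSg, hBadj⟩) htBm
      · exact ⟨tB, h1, sB, hsBSg, hBadj⟩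
    · rcases hsplit' tC htCA with h1 | h1
      · exact absurd h1 hc1
      · exact ⟨tC, h1, sC, hsCSg, hCadj⟩
  obtain ⟨tK, htKrr, sK, hsKSg, htKsK⟩ := hsecond
  -- define the branch sets
  set Cb : α → Set β := fun a =>
    if ha : a = u then {t | t ∈ qA.support}
    else if hb : a = v then {t | t ∈ rr.support}
    else D ⟨a, memc ha hb⟩ ∪ {t | a = w ∧ t ∈ Sg} with hCb
  have hCu : Cb u = {t | t ∈ qA.support} := by rw [hCb]; simp
  have hCv : Cb v = {t | t ∈ rr.support} := by
    rw [hCb]; simp [huv.ne.symm]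
  have hCgen : ∀ (a : α) (ha : a ≠ u) (hb : a ≠ v),
      Cb a = D ⟨a, memc ha hb⟩ ∪ {t | a = w ∧ t ∈ Sg} := by
    intro a ha hb
    simp only [hCb]
    rw [dif_neg ha, dif_neg hb]
  -- membership helper facts
  have hPAT' : ∀ t ∈ PA.support, t ∈ T' := fun t ht => Or.inl ht
  have hSgPA : ∀ t ∈ Sg, t ∉ PA.support := fun t ht => (SgsubM ht).2.1
  refine ⟨Cb, ?_, ?_, ?_, ?_⟩
  · -- roots
    intro a
    by_cases ha : a = u
    · subst ha; rw [hCu]; exact qA.start_mem_support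
    · by_cases hb : a = v
      · subst hb; rw [hCv]; exact rr.end_mem_support
      · rw [hCgen a ha hb]
        exact Or.inl (hDroot ⟨a, memc ha hb⟩)
  · -- connectivity
    intro a
    by_cases ha : a = u
    · subst ha; rw [hCu]; exact support_induce_connected qA
    · by_cases hb : a = v
      · subst hb; rw [hCv]; exact support_induce_connected rr
      · rw [hCgen a ha hb]
        by_cases haw : a = w
        · subst haw
          have hsimp : {t | a = a ∧ t ∈ Sg} = Sg := by ext t; simp
          rw [hsimp]
          have hfwCw : f a ∈ D ⟨a, memc ha hb⟩ ∪ Sg := Or.inr hfwSg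
          have hSgr : ∀ t (htS : t ∈ Sg),
              (G.induce (D ⟨a, memc ha hb⟩ ∪ Sg)).Reachable ⟨f a, hfwCw⟩ ⟨t, Or.inr htS⟩ := by
            intro t htS
            obtain ⟨p, hp⟩ := htS
            exact reach_induce p (fun x hx => Or.inr (Sgspread hfwSg p hp x hx)) hfwCw
              (Or.inr ⟨p, hp⟩)
          have hDr : ∀ (x y : ↥(D ⟨a, memc ha hb⟩))
              (pw : (G'.induce (D ⟨a, memc ha hb⟩)).Walk x y),
              (G.induce (D ⟨a, memc ha hb⟩ ∪ Sg)).Reachable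
                ⟨x.1, Or.inl x.2⟩ ⟨y.1, Or.inl y.2⟩ := by
            intro x y pw
            induction pw with
            | nil => exact Reachable.refl _
            | @cons p q z hadj pw2 ih =>
              refine Reachable.trans ?_ ih
              have hadj' : G'.Adj p.1 q.1 := hadj
              rw [hG', SimpleGraph.fromRel_adj] at hadj'
              obtain ⟨hne2, hcl | hcl⟩ := hadj'
              · rcases hcl with ⟨-, -, hA⟩ | ⟨hpw, -, s, hsSg, hsq⟩
                · exact SimpleGraph.Adj.reachable (by exact hA)
                · have r1 := hSgr s hsSg
                  rw [show (⟨f a, hfwCw⟩ : ↥(D ⟨a, memc ha hb⟩ ∪ Sg)) = ⟨p.1, Or.inl p.2⟩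
                    from Subtype.ext hpw.symm] at r1
                  exact r1.trans (SimpleGraph.Adj.reachable (by exact hsq))
              · rcases hcl with ⟨-, -, hA⟩ | ⟨hqw, -, s, hsSg, hsp⟩
                · exact SimpleGraph.Adj.reachable (by exact hA.symm)
                · have r1 := (hSgr s hsSg).trans
                    (SimpleGraph.Adj.reachable (show (G.induce (D ⟨a, memc ha hb⟩ ∪ Sg)).Adj
                      ⟨s, Or.inr hsSg⟩ ⟨p.1, Or.inl p.2⟩ by exact hsp))
                  have r2 := r1.symm
                  rw [show (⟨f a, hfwCw⟩ : ↥(D ⟨a, memc ha hb⟩ ∪ Sg)) = ⟨q.1, Or.inl q.2⟩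
                    from Subtype.ext hqw.symm] at r2
                  exact r2
          rw [SimpleGraph.connected_iff]
          constructor
          · have key2 : ∀ z : ↥(D ⟨a, memc ha hb⟩ ∪ Sg),
                (G.induce (D ⟨a, memc ha hb⟩ ∪ Sg)).Reachable ⟨f a, hfwCw⟩ z := by
              rintro ⟨t, ht⟩
              rcases ht with htD | htS
              · obtain ⟨pw⟩ := (hDconn ⟨a, memc ha hb⟩).preconnected
                  ⟨f a, hDroot ⟨a, memc ha hb⟩⟩ ⟨t, htD⟩
                exact hDr _ _ pw
              · exact hSgr t htS
            intro z1 z2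
            exact (key2 z1).symm.trans (key2 z2)
          · exact ⟨⟨f a, hfwCw⟩⟩
        · have hempty : {t | a = w ∧ t ∈ Sg} = (∅ : Set β) := by
            ext t; simp [haw]
          rw [hempty, Set.union_empty]
          refine induce_connected_mono ?_ (hDconn ⟨a, memc ha hb⟩)
          intro p q hp hq hadj
          rw [hG', SimpleGraph.fromRel_adj] at hadj
          obtain ⟨hne, hcl | hcl⟩ := hadj
          · rcases hcl with ⟨-, -, hA⟩ | ⟨hpw, -, -⟩
            · exact hA
            · exact absurd (congrArg Subtype.val (hfwD _ (hpw ▸ hp))) haw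
          · rcases hcl with ⟨-, -, hA⟩ | ⟨hqw, -, -⟩
            · exact hA.symm
            · exact absurd (congrArg Subtype.val (hfwD _ (hqw ▸ hq))) haw
  · -- pairwise disjointness
    have hmem : ∀ (x : α) (t : β), t ∈ Cb x → (x = u ∧ t ∈ qA.support) ∨
        (x = v ∧ t ∈ rr.support) ∨
        ∃ (h1 : x ≠ u) (h2 : x ≠ v), t ∈ D ⟨x, memc h1 h2⟩ ∨ (x = w ∧ t ∈ Sg) := by
      intro x t ht
      by_cases h1 : x = u
      · subst h1; rw [hCu] at ht; exact Or.inl ⟨rfl, ht⟩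
      · by_cases h2 : x = v
        · subst h2; rw [hCv] at ht; exact Or.inr (Or.inl ⟨rfl, ht⟩)
        · rw [hCgen x h1 h2] at ht
          rcases ht with ht | ht
          · exact Or.inr (Or.inr ⟨h1, h2, Or.inl ht⟩)
          · exact Or.inr (Or.inr ⟨h1, h2, Or.inr ht⟩)
    have hqAT : ∀ t ∈ qA.support, t ∈ T' := fun t ht => hPAT' t (hqAsub t ht)
    have hrrT : ∀ t ∈ rr.support, t ∈ T' := fun t ht => hPAT' t (hrrsub t ht)
    have hgenK : ∀ (x : α) (h1 : x ≠ u) (h2 : x ≠ v) (t : β),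
        (t ∈ D ⟨x, memc h1 h2⟩ ∨ (x = w ∧ t ∈ Sg)) → t ∉ T' ∨ t ∉ PA.support := by
      intro x h1 h2 t ht
      rcases ht with ht | ⟨-, ht⟩
      · exact Or.inl (hD_T' _ t ht)
      · exact Or.inr (hSgPA t ht)
    intro a b hab
    rw [Set.disjoint_left]
    intro t hta htb
    rcases hmem a t hta with ⟨hau, h1⟩ | ⟨hav, h1⟩ | ⟨ha1, ha2, h1⟩ <;>
      rcases hmem b t htb with ⟨hbu, h2⟩ | ⟨hbv, h2⟩ | ⟨hb1, hb2, h2⟩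
    · exact hab (hau.trans hbu.symm)
    · exact hdisjK t h1 h2
    · rcases hgenK b hb1 hb2 t h2 with h3 | h3
      · exact h3 (hqAT t h1)
      · exact h3 (hqAsub t h1)
    · exact hdisjK t h2 h1
    · exact hab (hav.trans hbv.symm)
    · rcases hgenK b hb1 hb2 t h2 with h3 | h3
      · exact h3 (hrrT t h1)
      · exact h3 (hrrsub t h1)
    · rcases hgenK a ha1 ha2 t h1 with h3 | h3
      · exact h3 (hqAT t h2)
      · exact h3 (hqAsub t h2)
    · rcases hgenK a ha1 ha2 t h1 with h3 | h3
      · exact h3 (hrrT t h2)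
      · exact h3 (hrrsub t h2)
    · rcases h1 with h1 | ⟨haw, h1⟩ <;> rcases h2 with h2 | ⟨hbw, h2⟩
      · have hne : (⟨a, memc ha1 ha2⟩ : ↥(({u, v} : Set α)ᶜ)) ≠ ⟨b, memc hb1 hb2⟩ :=
          fun he => hab (congrArg Subtype.val he)
        exact Set.disjoint_left.mp (hDdisj hne) h1 h2
      · have := SgD ⟨a, memc ha1 ha2⟩ t h2 h1
        exact hab ((congrArg Subtype.val this).trans hbw.symm)
      · have := SgD ⟨b, memc hb1 hb2⟩ t h1 h2
        exact hab (haw.trans (congrArg Subtype.val this).symm)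
      · exact hab (haw.trans hbw.symm)
  · -- edges
    have hCbu : ∀ t ∈ qA.support, t ∈ Cb u := by
      intro t ht; rw [hCu]; exact ht
    have hCbv : ∀ t ∈ rr.support, t ∈ Cb v := by
      intro t ht; rw [hCv]; exact ht
    have hCbwSg : ∀ t ∈ Sg, t ∈ Cb w := by
      intro t ht
      rw [hCgen w huw.ne.symm hvw.ne.symm]
      exact Or.inr ⟨rfl, ht⟩
    have hCbgenD : ∀ (x : α) (h1 : x ≠ u) (h2 : x ≠ v) (t : β),
        t ∈ D ⟨x, memc h1 h2⟩ → t ∈ Cb x := by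
      intro x h1 h2 t ht
      rw [hCgen x h1 h2]
      exact Or.inl ht
    intro a b hab
    by_cases hau : a = u
    · rcases deg_two_nbrs huv huw hvw.ne hdu (hau ▸ hab) with hbv | hbw
      · exact ⟨m, hau ▸ hCbu m qA.end_mem_support, nA,
          hbv ▸ hCbv nA rr.start_mem_support, hrA⟩
      · exact ⟨m, hau ▸ hCbu m qA.end_mem_support, sm, hbw ▸ hCbwSg sm hsmSg, hmsm⟩
    · by_cases hbu : b = u
      · rcases deg_two_nbrs huv huw hvw.ne hdu (hbu ▸ hab.symm) with hav | haw
        · exact ⟨nA, hav ▸ hCbv nA rr.start_mem_support, m,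
            hbu ▸ hCbu m qA.end_mem_support, hrA.symm⟩
        · exact ⟨sm, haw ▸ hCbwSg sm hsmSg, m, hbu ▸ hCbu m qA.end_mem_support, hmsm.symm⟩
      · by_cases hav : a = v
        · rcases deg_two_nbrs huv.symm hvw huw.ne hdv (hav ▸ hab) with hbu' | hbw
          · exact absurd hbu' hbu
          · exact ⟨tK, hav ▸ hCbv tK htKrr, sK, hbw ▸ hCbwSg sK hsKSg, htKsK⟩
        · by_cases hbv : b = v
          · rcases deg_two_nbrs huv.symm hvw huw.ne hdv (hbv ▸ hab.symm) with hau' | haw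
            · exact absurd hau' hau
            · exact ⟨sK, haw ▸ hCbwSg sK hsKSg, tK, hbv ▸ hCbv tK htKrr, htKsK.symm⟩
          · obtain ⟨p, hp, q, hq, hpq⟩ := hDadj ⟨a, memc hau hav⟩ ⟨b, memc hbu hbv⟩ hab
            rw [hG', SimpleGraph.fromRel_adj] at hpq
            obtain ⟨hne2, hcl | hcl⟩ := hpq
            · rcases hcl with ⟨-, -, hA⟩ | ⟨hpw, -, s, hsSg, hsq⟩
              · exact ⟨p, hCbgenD a hau hav p hp, q, hCbgenD b hbu hbv q hq, hA⟩
              · have haw : a = w :=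
                  congrArg Subtype.val (hfwD ⟨a, memc hau hav⟩ (hpw ▸ hp))
                exact ⟨s, haw ▸ hCbwSg s hsSg, q, hCbgenD b hbu hbv q hq, hsq⟩
            · rcases hcl with ⟨-, -, hA⟩ | ⟨hqw, -, s, hsSg, hsp⟩
              · exact ⟨p, hCbgenD a hau hav p hp, q, hCbgenD b hbu hbv q hq, hA.symm⟩
              · have hbw : b = w :=
                  congrArg Subtype.val (hfwD ⟨b, memc hbu hbv⟩ (hqw ▸ hq))
                exact ⟨p, hCbgenD a hau hav p hp, s, hbw ▸ hCbwSg s hsSg, hsp.symm⟩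
end Bwd

section Fwd
variable {α : Type} [Fintype α] [DecidableEq α] {H : SimpleGraph α} [DecidableRel H.Adj]
variable {u v w : α}

set_option maxHeartbeats 1000000 in
lemma forward_dir (huv : H.Adj u v) (hvw : H.Adj v w) (huw : H.Adj u w)
    (hdu : H.degree u = 2) (hdv : H.degree v = 2)
    (hH : IsRootedContractible H) :
    IsRootedContractible (H.induce ({u, v} : Set α)ᶜ) := by
  classical
  intro β _inst G f' hS
  obtain ⟨S'⟩ := hS
  have hwm : w ∈ ({u, v} : Set α)ᶜ := by
    simp only [Set.mem_compl_iff, Set.mem_insert_iff, Set.mem_singleton_iff]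
    push_neg
    exact ⟨huw.ne.symm, hvw.ne.symm⟩
  set fw' : β := f' ⟨w, hwm⟩ with hfw'
  -- the enlarged graph
  set r : β ⊕ Bool → β ⊕ Bool → Prop := fun a b =>
    (∃ x y, G.Adj x y ∧ a = Sum.inl x ∧ b = Sum.inl y) ∨
    (a = Sum.inr false ∧ b = Sum.inr true) ∨
    (a = Sum.inr false ∧ b = Sum.inl fw') ∨
    (a = Sum.inr true ∧ b = Sum.inl fw') with hr
  set Gp : SimpleGraph (β ⊕ Bool) := SimpleGraph.fromRel r with hGp
  have memc : ∀ {x : α}, x ≠ u → x ≠ v → x ∈ ({u, v} : Set α)ᶜ := by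
    intro x h1 h2
    simp only [Set.mem_compl_iff, Set.mem_insert_iff, Set.mem_singleton_iff]
    push_neg
    exact ⟨h1, h2⟩
  set fmap : α → β ⊕ Bool := fun x =>
    if hx : x = u then Sum.inr false else if hx' : x = v then Sum.inr true
    else Sum.inl (f' ⟨x, memc hx hx'⟩) with hfmap
  have hfu : fmap u = Sum.inr false := by simp [hfmap]
  have hfv : fmap v = Sum.inr true := by simp [hfmap, huv.ne.symm]
  have hfgen : ∀ (x : α) (h1 : x ≠ u) (h2 : x ≠ v), fmap x = Sum.inl (f' ⟨x, memc h1 h2⟩) := by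
    intro x h1 h2; simp [hfmap, h1, h2]
  have hfw : fmap w = Sum.inl fw' := by
    rw [hfgen w huw.ne.symm hvw.ne.symm]
  have hinj : Function.Injective fmap := by
    intro a b hab
    by_cases ha : a = u <;> by_cases hb : b = u
    · rw [ha, hb]
    · by_cases hb' : b = v
      · rw [ha, hb'] at hab; rw [hfu, hfv] at hab; simp at hab
      · rw [ha, hfu, hfgen b hb hb'] at hab; simp at hab
    · by_cases ha' : a = v
      · rw [ha', hb] at hab; rw [hfv, hfu] at hab; simp at hab
      · rw [hb, hfu, hfgen a ha ha'] at hab; simp at hab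
    · by_cases ha' : a = v <;> by_cases hb' : b = v
      · rw [ha', hb']
      · rw [ha', hfv, hfgen b hb hb'] at hab; simp at hab
      · rw [hb', hfv, hfgen a ha ha'] at hab; simp at hab
      · rw [hfgen a ha ha', hfgen b hb hb'] at hab
        simp only [Sum.inl.injEq] at hab
        have := f'.injective hab
        exact congrArg Subtype.val this
  set f : α ↪ β ⊕ Bool := ⟨fmap, hinj⟩ with hf
  have hinlAdj : ∀ {a b : β}, G.Adj a b → Gp.Adj (Sum.inl a) (Sum.inl b) := by
    intro a b hab
    rw [hGp, SimpleGraph.fromRel_adj]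
    exact ⟨by simp [hab.ne], Or.inl (Or.inl ⟨a, b, hab, rfl, rfl⟩)⟩
  set inlHom : G →g Gp := ⟨Sum.inl, hinlAdj⟩ with hinlHom
  -- single edges of the triangle in Gp
  have hA_uv : Gp.Adj (Sum.inr false) (Sum.inr true) := by
    rw [hGp, SimpleGraph.fromRel_adj]
    exact ⟨by simp, Or.inl (Or.inr (Or.inl ⟨rfl, rfl⟩))⟩
  have hA_uw : Gp.Adj (Sum.inr false) (Sum.inl fw') := by
    rw [hGp, SimpleGraph.fromRel_adj]
    exact ⟨by simp, Or.inl (Or.inr (Or.inr (Or.inl ⟨rfl, rfl⟩)))⟩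
  have hA_vw : Gp.Adj (Sum.inr true) (Sum.inl fw') := by
    rw [hGp, SimpleGraph.fromRel_adj]
    exact ⟨by simp, Or.inl (Or.inr (Or.inr (Or.inr ⟨rfl, rfl⟩)))⟩
  have hsingle : ∀ (a b : β ⊕ Bool) (hab : Gp.Adj a b),
      (SimpleGraph.Walk.cons hab SimpleGraph.Walk.nil).IsPath := by
    intro a b hab
    exact SimpleGraph.Walk.IsPath.nil.cons (by simp [hab.ne])
  have single_case : ∀ (x y : α) (h : H.Adj x y) (a b : β ⊕ Bool) (hab : Gp.Adj a b)
      (hfa : fmap x = a) (hfb : fmap y = b),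
      ∃ q : Gp.Walk (f x) (f y), q.IsPath ∧
      (∀ z, f z ∈ q.support → z = x ∨ z = y) ∧
      (∀ p ∈ q.support, p ∉ Set.range f →
        ∃ (hx : x ∈ ({u, v} : Set α)ᶜ) (hy : y ∈ ({u, v} : Set α)ᶜ) (c : β),
          p = Sum.inl c ∧
            c ∈ ((S'.path ⟨x, hx⟩ ⟨y, hy⟩ (by exact h)).support)) := by
    intro x y h a b hab hfa hfb
    refine ⟨(SimpleGraph.Walk.cons hab SimpleGraph.Walk.nil).copy hfa.symm hfb.symm,
      by simp [hsingle], ?_, ?_⟩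
    · intro z hz
      simp only [SimpleGraph.Walk.support_copy, SimpleGraph.Walk.support_cons,
        SimpleGraph.Walk.support_nil, List.mem_cons, List.mem_singleton] at hz
      rcases hz with hz | hz | hz
      · exact Or.inl (hinj (show fmap z = fmap x by rw [hfa]; exact hz))
      · exact Or.inr (hinj (show fmap z = fmap y by rw [hfb]; exact hz))
      · exact absurd hz (by simp)
    · intro p hp hnr
      exfalso; apply hnr
      simp only [SimpleGraph.Walk.support_copy, SimpleGraph.Walk.support_cons,
        SimpleGraph.Walk.support_nil, List.mem_cons, List.mem_singleton] at hp
      rcases hp with rfl | rfl | hp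
      · exact ⟨x, hfa⟩
      · exact ⟨y, hfb⟩
      · exact absurd hp (by simp)
  have key : ∀ x y (h : H.Adj x y), ∃ q : Gp.Walk (f x) (f y), q.IsPath ∧
      (∀ z, f z ∈ q.support → z = x ∨ z = y) ∧
      (∀ p ∈ q.support, p ∉ Set.range f →
        ∃ (hx : x ∈ ({u, v} : Set α)ᶜ) (hy : y ∈ ({u, v} : Set α)ᶜ) (c : β),
          p = Sum.inl c ∧
            c ∈ ((S'.path ⟨x, hx⟩ ⟨y, hy⟩ (by exact h)).support)) := by
    intro x y h
    by_cases hxu : x = u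
    · have h' : H.Adj u y := hxu ▸ h
      rcases deg_two_nbrs huv huw hvw.ne hdu h' with hyv | hyw
      · exact single_case x y h _ _ hA_uv (by rw [hxu]; exact hfu) (by rw [hyv]; exact hfv)
      · exact single_case x y h _ _ hA_uw (by rw [hxu]; exact hfu) (by rw [hyw]; exact hfw)
    · by_cases hxv : x = v
      · have h' : H.Adj v y := hxv ▸ h
        rcases deg_two_nbrs huv.symm hvw huw.ne hdv h' with hyu | hyw
        · exact single_case x y h _ _ hA_uv.symm (by rw [hxv]; exact hfv) (by rw [hyu]; exact hfu)
        · exact single_case x y h _ _ hA_vw (by rw [hxv]; exact hfv) (by rw [hyw]; exact hfw)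
      · by_cases hyu : y = u
        · have h' : H.Adj u x := hyu ▸ h.symm
          rcases deg_two_nbrs huv huw hvw.ne hdu h' with hxv' | hxw
          · exact absurd hxv' hxv
          · exact single_case x y h _ _ hA_uw.symm (by rw [hxw]; exact hfw) (by rw [hyu]; exact hfu)
        · by_cases hyv : y = v
          · have h' : H.Adj v x := hyv ▸ h.symm
            rcases deg_two_nbrs huv.symm hvw huw.ne hdv h' with hxu' | hxw
            · exact absurd hxu' hxu
            · exact single_case x y h _ _ hA_vw.symm (by rw [hxw]; exact hfw) (by rw [hyv]; exact hfv)
          · -- generic case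
            have hx : x ∈ ({u, v} : Set α)ᶜ := memc hxu hxv
            have hy : y ∈ ({u, v} : Set α)ᶜ := memc hyu hyv
            refine ⟨((S'.path ⟨x, hx⟩ ⟨y, hy⟩ (by exact h)).map inlHom).copy
              (by exact (hfgen x hxu hxv).symm) (by exact (hfgen y hyu hyv).symm), ?_, ?_, ?_⟩
            · rw [SimpleGraph.Walk.isPath_copy]
              exact SimpleGraph.Walk.map_isPath_of_injective Sum.inl_injective
                (S'.path_isPath _ _ _)
            · intro z hz
              rw [SimpleGraph.Walk.support_copy, SimpleGraph.Walk.support_map] at hz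
              obtain ⟨c, hc, hceq⟩ := List.mem_map.mp hz
              by_cases hzu : z = u
              · rw [show f z = Sum.inr false by rw [hzu]; exact hfu] at hceq; simp at hceq
              · by_cases hzv : z = v
                · rw [show f z = Sum.inr true by rw [hzv]; exact hfv] at hceq; simp at hceq
                · rw [show f z = Sum.inl (f' ⟨z, memc hzu hzv⟩) from hfgen z hzu hzv] at hceq
                  have hceq2 : f' ⟨z, memc hzu hzv⟩ = c := Sum.inl_injective hceq.symm
                  have := S'.root_mem _ _ _ ⟨z, memc hzu hzv⟩ (hceq2 ▸ hc)
                  rcases this with h1 | h1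
                  · exact Or.inl (congrArg Subtype.val h1)
                  · exact Or.inr (congrArg Subtype.val h1)
            · intro p hp hnr
              rw [SimpleGraph.Walk.support_copy, SimpleGraph.Walk.support_map] at hp
              obtain ⟨c, hc, hceq⟩ := List.mem_map.mp hp
              exact ⟨hx, hy, c, hceq.symm, hc⟩
  choose pick hp1 hp2 hp3 using key
  set enc : α → ℕ := fun a => ((Fintype.equivFin α) a : ℕ) with henc
  have encInj : Function.Injective enc := by
    intro a b hab
    exact (Fintype.equivFin α).injective (Fin.val_injective hab)
  set pathF : ∀ x y, H.Adj x y → Gp.Walk (f x) (f y) := fun x y h =>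
    if enc x < enc y then pick x y h else (pick y x h.symm).reverse with hpathF
  have hQ : ∀ x y (h : H.Adj x y), (pathF x y h).IsPath ∧
      (∀ z, f z ∈ (pathF x y h).support → z = x ∨ z = y) ∧
      (∀ p ∈ (pathF x y h).support, p ∉ Set.range f →
        ∃ (hx : x ∈ ({u, v} : Set α)ᶜ) (hy : y ∈ ({u, v} : Set α)ᶜ) (c : β),
          p = Sum.inl c ∧
            c ∈ ((S'.path ⟨x, hx⟩ ⟨y, hy⟩ (by exact h)).support)) := by
    intro x y h
    rw [hpathF]
    by_cases hlt : enc x < enc y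
    · simp only [if_pos hlt]
      exact ⟨hp1 x y h, hp2 x y h, hp3 x y h⟩
    · simp only [if_neg hlt]
      refine ⟨(hp1 y x h.symm).reverse, ?_, ?_⟩
      · intro z hz
        rw [SimpleGraph.Walk.support_reverse, List.mem_reverse] at hz
        exact (hp2 y x h.symm z hz).symm
      · intro p hp hnr
        rw [SimpleGraph.Walk.support_reverse, List.mem_reverse] at hp
        obtain ⟨hy, hx, c, hceq, hmem⟩ := hp3 y x h.symm p hp hnr
        refine ⟨hx, hy, c, hceq, ?_⟩
        rw [S'.path_symm ⟨x, hx⟩ ⟨y, hy⟩ (by exact h), SimpleGraph.Walk.support_reverse,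
          List.mem_reverse] at hmem
        exact hmem
  have scheme : HScheme H Gp f := by
    refine ⟨pathF, ?_, fun x y h => (hQ x y h).1, fun x y h => (hQ x y h).2.1, ?_⟩
    · intro x y h
      rw [hpathF]
      by_cases hlt : enc x < enc y
      · have hltn : ¬ enc y < enc x := lt_asymm hlt
        simp only [if_pos hlt, if_neg hltn]
      · have hne : enc x ≠ enc y := fun he => h.ne (encInj he)
        have hlt' : enc y < enc x := by omega
        simp only [if_pos hlt', if_neg hlt, SimpleGraph.Walk.reverse_reverse]
    · intro p hex
      by_cases hr2 : p ∈ Set.range f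
      · obtain ⟨z0, rfl⟩ := hr2
        exact ⟨z0, fun x y h hp => (hQ x y h).2.1 z0 hp⟩
      · obtain ⟨x0, y0, h0, hp0⟩ := hex
        obtain ⟨hx0, hy0, c, hceq, hmem⟩ := (hQ x0 y0 h0).2.2 p hp0 hr2
        obtain ⟨z', hz'⟩ := S'.common_endpoint c ⟨⟨x0, hx0⟩, ⟨y0, hy0⟩, (by exact h0), hmem⟩
        refine ⟨z'.1, fun x y h hp => ?_⟩
        obtain ⟨hx, hy, c', hceq', hmem'⟩ := (hQ x y h).2.2 p hp hr2
        have hcc : c' = c := Sum.inl_injective (hceq'.symm.trans hceq)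
        rcases hz' ⟨x, hx⟩ ⟨y, hy⟩ (by exact h) (by rw [← hcc]; exact hmem') with h1 | h1
        · exact Or.inl (congrArg Subtype.val h1)
        · exact Or.inr (congrArg Subtype.val h1)
  -- apply rooted contractibility of H
  obtain ⟨Cp, hroot, hconn, hdisj, hadj⟩ := hH (β ⊕ Bool) Gp f ⟨scheme⟩
  -- extract branch sets for H' in G
  have noinr : ∀ (x : α), x ∈ ({u, v} : Set α)ᶜ → ∀ b : Bool, Sum.inr b ∉ Cp x := by
    intro x hxm b hb
    simp only [Set.mem_compl_iff, Set.mem_insert_iff, Set.mem_singleton_iff] at hxm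
    push_neg at hxm
    cases b
    · have : Sum.inr false ∈ Cp u := hfu ▸ hroot u
      exact (hdisj (show x ≠ u from hxm.1)).ne_of_mem hb this rfl
    · have : Sum.inr true ∈ Cp v := hfv ▸ hroot v
      exact (hdisj (show x ≠ v from hxm.2)).ne_of_mem hb this rfl
  have adjinl : ∀ {c d : β}, Gp.Adj (Sum.inl c) (Sum.inl d) → G.Adj c d := by
    intro c d hcd
    rw [hGp, SimpleGraph.fromRel_adj] at hcd
    obtain ⟨-, hcd | hcd⟩ := hcd
    · rcases hcd with ⟨a, b, hab, h1, h2⟩ | ⟨h1, h2⟩ | ⟨h1, h2⟩ | ⟨h1, h2⟩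
      · obtain rfl : c = a := Sum.inl_injective h1
        obtain rfl : d = b := Sum.inl_injective h2
        exact hab
      · exact absurd h1 (by simp)
      · exact absurd h1 (by simp)
      · exact absurd h1 (by simp)
    · rcases hcd with ⟨a, b, hab, h1, h2⟩ | ⟨h1, h2⟩ | ⟨h1, h2⟩ | ⟨h1, h2⟩
      · obtain rfl : d = a := Sum.inl_injective h1
        obtain rfl : c = b := Sum.inl_injective h2
        exact hab.symm
      · exact absurd h1 (by simp)
      · exact absurd h1 (by simp)
      · exact absurd h1 (by simp)
  refine ⟨fun x => Sum.inl ⁻¹' (Cp x.1), ?_, ?_, ?_, ?_⟩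
  · intro x
    have : f x.1 ∈ Cp x.1 := hroot x.1
    have hxu : (x : α) ≠ u := by
      have := x.2; simp only [Set.mem_compl_iff, Set.mem_insert_iff,
        Set.mem_singleton_iff] at this; push_neg at this; exact this.1
    have hxv : (x : α) ≠ v := by
      have := x.2; simp only [Set.mem_compl_iff, Set.mem_insert_iff,
        Set.mem_singleton_iff] at this; push_neg at this; exact this.2
    rw [show f x.1 = Sum.inl (f' ⟨x.1, memc hxu hxv⟩) from hfgen x.1 hxu hxv] at this
    simpa using this
  · intro x
    have hcx := hconn x.1
    have hxu : (x : α) ≠ u := by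
      have := x.2; simp only [Set.mem_compl_iff, Set.mem_insert_iff,
        Set.mem_singleton_iff] at this; push_neg at this; exact this.1
    have hxv : (x : α) ≠ v := by
      have := x.2; simp only [Set.mem_compl_iff, Set.mem_insert_iff,
        Set.mem_singleton_iff] at this; push_neg at this; exact this.2
    have hnoinr := noinr x.1 x.2
    set Z : Set β := Sum.inl ⁻¹' (Cp x.1) with hZ
    set φ : ↥(Cp x.1) → ↥Z := fun q => ⟨Sum.elim id (fun _ => fw') q.1, by
      rcases q with ⟨p, hp⟩
      rcases p with c | b
      · exact hp
      · exact absurd hp (hnoinr b)⟩ with hphi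
    refine SimpleGraph.Connected.map ⟨φ, ?_⟩ ?_ hcx
    · rintro ⟨p, hp⟩ ⟨q, hq⟩ hpq
      simp only [SimpleGraph.comap_adj, Function.Embedding.coe_subtype] at hpq ⊢
      rcases p with c | b
      · rcases q with d | b'
        · exact adjinl hpq
        · exact absurd hq (hnoinr b')
      · exact absurd hp (hnoinr b)
    · rintro ⟨c, hc⟩
      exact ⟨⟨Sum.inl c, hc⟩, rfl⟩
  · intro x y hxy
    have : x.1 ≠ y.1 := fun he => hxy (Subtype.ext he)
    exact (hdisj this).preimage _
  · intro x y hxy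
    obtain ⟨p, hp, q, hq, hpq⟩ := hadj x.1 y.1 (by exact hxy)
    rcases p with c | b
    · rcases q with d | b'
      · exact ⟨c, hp, d, hq, adjinl hpq⟩
      · exact absurd hq (noinr y.1 y.2 b')
    · exact absurd hp (noinr x.1 x.2 b)
end Fwd

/-- If `H` contains a triangle `u v w` with `u` and `v` of degree 2
in `H`, then `H` is rooted-contractible iff `H − {u, v}` is rooted-contractible. -/
theorem triangle_rooted_contractible_iff {α : Type} [Fintype α] [DecidableEq α]
    (H : SimpleGraph α) [DecidableRel H.Adj] (u v w : α)
    (huv : H.Adj u v) (hvw : H.Adj v w) (huw : H.Adj u w)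
    (hdu : H.degree u = 2) (hdv : H.degree v = 2) :
    IsRootedContractible H ↔ IsRootedContractible (H.induce ({u, v} : Set α)ᶜ) := by
  constructor
  · intro h
    exact forward_dir huv hvw huw hdu hdv h
  · intro h
    exact backward_dir huv hvw huw hdu hdv h
end
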